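/- arXiv:1212.2795 — 6 statements merged into one kernel-verified Lean document; each statement's English description precedes it below -/
import Mathlib

section
/- (Motzkin–Straus) If $G$ is a 2-uniform graph (simple graph) in which a largest clique has order $l$, then $\lambda(G) = \lambda(K^{(2)}_l) = \frac{1}{2}\left(1 - \frac{1}{l}\right)$. -/
open Finset

/-- Weightings on vertex set `[n] = {1,…,n}`: nonnegative, summing to 1, zero outside `[n]`. -/
def simplexOn (n : ℕ) (x : ℕ → ℝ) : Prop :=
  (∀ i, 0 ≤ x i) ∧ (∑ i ∈ Finset.Icc 1 n, x i = 1) ∧ ∀ i, i ∉ Finset.Icc 1 n → x i = 0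

/-- `λ(F, x) = ∑_{e ∈ F} ∏_{i ∈ e} x i` for a family of finite sets `F`. -/
def lagF (E : Finset (Finset ℕ)) (x : ℕ → ℝ) : ℝ := ∑ e ∈ E, ∏ i ∈ e, x i

/-- The Lagrangian of the hypergraph with edge set `E` on vertex set `[n]`. -/
noncomputable def lagr (n : ℕ) (E : Finset (Finset ℕ)) : ℝ :=
  sSup {v : ℝ | ∃ x : ℕ → ℝ, simplexOn n x ∧ v = lagF E x}

/-- `E` is the edge set of an `r`-uniform hypergraph on vertex set `[n]`. -/
def isRGraph (r n : ℕ) (E : Finset (Finset ℕ)) : Prop :=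
  ∀ e ∈ E, e.card = r ∧ e ⊆ Finset.Icc 1 n

/-- The complete `r`-graph `[l]^(r)`: all `r`-subsets of `[l]`. -/
def completeR (r l : ℕ) : Finset (Finset ℕ) := (Finset.Icc 1 l).powersetCard r

/-- The link `E_i` of vertex `i`. -/
def link (E : Finset (Finset ℕ)) (i : ℕ) : Finset (Finset ℕ) :=
  (E.filter fun e => i ∈ e).image fun e => e.erase i

/-- The pair link `E_{ij}`. -/
def link2 (E : Finset (Finset ℕ)) (i j : ℕ) : Finset (Finset ℕ) :=
  (E.filter fun e => i ∈ e ∧ j ∈ e).image fun e => (e.erase i).erase j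

/-- `E_{i \ j} = E_i ∩ E_j^c`. -/
def linkDiff (E : Finset (Finset ℕ)) (i j : ℕ) : Finset (Finset ℕ) :=
  (link E i).filter fun A => insert j A ∉ E

/-- `A` dominates `B` from below: same size and the `k`-th smallest element of `A`
is at most the `k`-th smallest element of `B`, for every `k`. -/
def domBelow (A B : Finset ℕ) : Prop :=
  A.card = B.card ∧ ∀ k, (Finset.sort A (· ≤ ·)).getD k 0 ≤ (Finset.sort B (· ≤ ·)).getD k 0

/-- `E` is left-compressed. -/
def leftCompressed (E : Finset (Finset ℕ)) : Prop :=
  ∀ B ∈ E, ∀ A : Finset ℕ, (∀ a ∈ A, 1 ≤ a) → domBelow A B → A ∈ E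

/-- The vertex set `T` spans a clique in the `r`-graph `E`. -/
def hasCliqueOn (E : Finset (Finset ℕ)) (r : ℕ) (T : Finset ℕ) : Prop :=
  ∀ e ⊆ T, e.card = r → e ∈ E

/-- `x` is an optimal weighting for the `r`-graph `E` on `[n]`. -/
def isOptimal (n : ℕ) (E : Finset (Finset ℕ)) (x : ℕ → ℝ) : Prop :=
  simplexOn n x ∧ lagF E x = lagr n E

/-- Number of nonzero weights. -/
noncomputable def suppCard (n : ℕ) (x : ℕ → ℝ) : ℕ := ((Finset.Icc 1 n).filter fun i => x i ≠ 0).card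

/-- A minimal optimal weighting: optimal, and any weighting with fewer nonzero
weights has strictly smaller Lagrangian value. -/
def isMinOptimal (n : ℕ) (E : Finset (Finset ℕ)) (x : ℕ → ℝ) : Prop :=
  isOptimal n E x ∧
    ∀ y : ℕ → ℝ, simplexOn n y → suppCard n y < suppCard n x → lagF E y < lagr n E

lemma pairs_id (x : ℕ → ℝ) (S : Finset ℕ) :
    ∑ e ∈ S.powersetCard 2, ∏ i ∈ e, x i
      = ((∑ i ∈ S, x i)^2 - ∑ i ∈ S, (x i)^2)/2 := by
  induction S using Finset.induction_on with
  | empty =>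
    rw [Finset.powersetCard_eq_empty.2 (by simp)]; simp
  | @insert a S ha ih =>
    rw [show (2:ℕ) = Nat.succ 1 from rfl, powersetCard_succ_insert ha]
    rw [Finset.sum_union]
    · rw [Finset.sum_image, Finset.sum_insert ha, Finset.sum_insert ha]
      · have h1 : ∑ e ∈ S.powersetCard 1, ∏ i ∈ insert a e, x i
            = x a * ∑ i ∈ S, x i := by
          rw [powersetCard_one, Finset.sum_map, Finset.mul_sum]
          refine Finset.sum_congr rfl fun i hi => ?_
          simp only [Function.Embedding.coeFn_mk]
          rw [Finset.prod_insert (by simp; rintro rfl; exact ha hi), Finset.prod_singleton]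
        rw [h1, ih]; ring
      · intro e he f hf hef
        have hae : a ∉ e := fun h => ha ((Finset.mem_powersetCard.1 he).1 h)
        have haf : a ∉ f := fun h => ha ((Finset.mem_powersetCard.1 hf).1 h)
        have := congrArg (Finset.erase · a) hef
        simpa [Finset.erase_insert hae, Finset.erase_insert haf] using this
    · rw [Finset.disjoint_left]
      intro e he hei
      obtain ⟨f, hf, rfl⟩ := Finset.mem_image.1 hei
      exact ha ((Finset.mem_powersetCard.1 he).1 (Finset.mem_insert_self a f))

noncomputable def wsum (E : Finset (Finset ℕ)) (x : ℕ → ℝ) (i : ℕ) : ℝ :=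
  ∑ e ∈ E.filter (fun e => i ∈ e), ∏ k ∈ e.erase i, x k

-- edges containing i don't contain j, when {i,j} ∉ E
lemma not_mem_of_edge {n : ℕ} {E : Finset (Finset ℕ)} (hG : isRGraph 2 n E)
    {i j : ℕ} (hij : i ≠ j) (hE : ({i,j} : Finset ℕ) ∉ E) {e : Finset ℕ}
    (he : e ∈ E) (hi : i ∈ e) : j ∉ e := by
  intro hj
  have hsub : ({i,j} : Finset ℕ) ⊆ e := by
    intro k hk; simp only [Finset.mem_insert, Finset.mem_singleton] at hk
    rcases hk with rfl | rfl <;> assumption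
  have : ({i,j} : Finset ℕ) = e := Finset.eq_of_subset_of_card_le hsub
    (by rw [(hG e he).1, Finset.card_insert_of_notMem (by simp [hij]), Finset.card_singleton])
  exact hE (this ▸ he)

lemma move_lemma {n : ℕ} {E : Finset (Finset ℕ)} (hG : isRGraph 2 n E)
    {i j : ℕ} (hij : i ≠ j) (hE : ({i,j} : Finset ℕ) ∉ E) (x : ℕ → ℝ) :
    lagF E (Function.update (Function.update x i (x i + x j)) j 0)
      = lagF E x + x j * (wsum E x i - wsum E x j) := by
  set y := Function.update (Function.update x i (x i + x j)) j 0 with hy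
  have hyi : y i = x i + x j := by simp [hy, Function.update, hij]
  have hyj : y j = 0 := by simp [hy]
  have hyk : ∀ k, k ≠ i → k ≠ j → y k = x k := by
    intro k hki hkj; simp [hy, Function.update, hki, hkj]
  -- split sums
  have split : ∀ z : ℕ → ℝ, lagF E z
      = (∑ e ∈ E.filter (fun e => i ∈ e), ∏ k ∈ e, z k)
        + (∑ e ∈ E.filter (fun e => j ∈ e), ∏ k ∈ e, z k)
        + (∑ e ∈ (E.filter (fun e => ¬ i ∈ e)).filter (fun e => ¬ j ∈ e), ∏ k ∈ e, z k) := by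
    intro z
    rw [lagF, ← Finset.sum_filter_add_sum_filter_not E (fun e => i ∈ e),
      ← Finset.sum_filter_add_sum_filter_not (E.filter (fun e => ¬ i ∈ e)) (fun e => j ∈ e)]
    have : (E.filter (fun e => ¬ i ∈ e)).filter (fun e => j ∈ e)
        = E.filter (fun e => j ∈ e) := by
      ext e
      simp only [Finset.mem_filter, and_assoc]
      constructor
      · rintro ⟨h1, _, h3⟩; exact ⟨h1, h3⟩
      · rintro ⟨h1, h3⟩
        exact ⟨h1, fun hi => not_mem_of_edge hG hij hE h1 hi h3, h3⟩
    rw [this]; ring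
  have prod_i : ∀ (z : ℕ → ℝ), ∀ e ∈ E.filter (fun e => i ∈ e),
      (∀ k ∈ e.erase i, z k = x k) → ∏ k ∈ e, z k = z i * ∏ k ∈ e.erase i, x k := by
    intro z e he hzk
    rw [← Finset.mul_prod_erase e z (Finset.mem_filter.1 he).2]
    congr 1
    exact Finset.prod_congr rfl hzk
  -- sums over E_i
  have sumi : ∀ (z : ℕ → ℝ), (∀ k, k ≠ i → k ≠ j → z k = x k) →
      ∑ e ∈ E.filter (fun e => i ∈ e), ∏ k ∈ e, z k = z i * wsum E x i := by
    intro z hz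
    rw [wsum, Finset.mul_sum]
    refine Finset.sum_congr rfl fun e he => ?_
    refine prod_i z e he fun k hk => ?_
    have hke := Finset.mem_of_mem_erase hk
    have hkj : k ≠ j := fun h => not_mem_of_edge hG hij hE (Finset.mem_filter.1 he).1
      (Finset.mem_filter.1 he).2 (h ▸ hke)
    exact hz k (Finset.ne_of_mem_erase hk) hkj
  have sumj : ∀ (z : ℕ → ℝ), (∀ k, k ≠ i → k ≠ j → z k = x k) →
      ∑ e ∈ E.filter (fun e => j ∈ e), ∏ k ∈ e, z k = z j * wsum E x j := by
    intro z hz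
    rw [wsum, Finset.mul_sum]
    refine Finset.sum_congr rfl fun e he => ?_
    rw [← Finset.mul_prod_erase e z (Finset.mem_filter.1 he).2]
    congr 1
    refine Finset.prod_congr rfl fun k hk => ?_
    have hke := Finset.mem_of_mem_erase hk
    have hki : k ≠ i := fun h => not_mem_of_edge hG (Ne.symm hij)
      (by rwa [Finset.pair_comm]) (Finset.mem_filter.1 he).1 (Finset.mem_filter.1 he).2 (h ▸ hke)
    exact hz k hki (Finset.ne_of_mem_erase hk)
  have sum0 : ∑ e ∈ (E.filter (fun e => ¬ i ∈ e)).filter (fun e => ¬ j ∈ e), ∏ k ∈ e, y k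
      = ∑ e ∈ (E.filter (fun e => ¬ i ∈ e)).filter (fun e => ¬ j ∈ e), ∏ k ∈ e, x k := by
    refine Finset.sum_congr rfl fun e he => Finset.prod_congr rfl fun k hk => ?_
    simp only [Finset.mem_filter] at he
    exact hyk k (fun h => he.1.2 (h ▸ hk)) (fun h => he.2 (h ▸ hk))
  have hxid : ∀ k, k ≠ i → k ≠ j → x k = x k := fun _ _ _ => rfl
  rw [split y, split x, sumi y hyk, sumj y hyk, sumi x hxid, sumj x hxid, sum0, hyi, hyj]
  ring

-- the clique-support bound
lemma clique_bound {n l : ℕ} {E : Finset (Finset ℕ)} (hG : isRGraph 2 n E)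
    (hl : 1 ≤ l)
    (hmax : ∀ T ⊆ Finset.Icc 1 n, hasCliqueOn E 2 T → T.card ≤ l)
    {x : ℕ → ℝ} (hx : simplexOn n x)
    (hcl : ∀ a ∈ (Finset.Icc 1 n).filter (fun i => x i ≠ 0),
      ∀ b ∈ (Finset.Icc 1 n).filter (fun i => x i ≠ 0), a ≠ b → ({a,b} : Finset ℕ) ∈ E) :
    lagF E x ≤ (1/2 : ℝ) * (1 - 1/(l:ℝ)) := by
  obtain ⟨hpos, hsum, hout⟩ := hx
  set S := (Finset.Icc 1 n).filter (fun i => x i ≠ 0) with hS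
  have hSsub : S ⊆ Finset.Icc 1 n := Finset.filter_subset _ _
  have hSx : ∑ i ∈ S, x i = 1 := by
    rw [hS, Finset.sum_filter_of_ne (fun i _ h => h), hsum]
  have hSne : S.Nonempty := by
    rw [← Finset.card_pos]
    by_contra h
    push_neg at h
    interval_cases h' : S.card
    · rw [Finset.card_eq_zero] at h'
      rw [h'] at hSx; simp at hSx
  have hclique : hasCliqueOn E 2 S := by
    intro e he hcard
    obtain ⟨a, b, hab, rfl⟩ := Finset.card_eq_two.1 hcard
    rw [Finset.insert_subset_iff, Finset.singleton_subset_iff] at he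
    exact hcl a he.1 b he.2 hab
  have hcardS : S.card ≤ l := hmax S hSsub hclique
  have h1 : lagF E x = ∑ e ∈ E.filter (fun e => e ⊆ S), ∏ i ∈ e, x i := by
    rw [lagF, Finset.sum_filter_of_ne]
    intro e he hne
    intro k hk
    by_contra hkS
    exact hne (Finset.prod_eq_zero hk (by
      have : k ∈ Finset.Icc 1 n := (hG e he).2 hk
      by_contra hxk
      exact hkS (Finset.mem_filter.2 ⟨this, hxk⟩)))
  have h2 : ∑ e ∈ E.filter (fun e => e ⊆ S), ∏ i ∈ e, x i
      ≤ ∑ e ∈ S.powersetCard 2, ∏ i ∈ e, x i := by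
    refine Finset.sum_le_sum_of_subset_of_nonneg ?_ ?_
    · intro e he
      rw [Finset.mem_filter] at he
      exact Finset.mem_powersetCard.2 ⟨he.2, (hG e he.1).1⟩
    · exact fun e _ _ => Finset.prod_nonneg fun k _ => hpos k
  have h3 := pairs_id x S
  have hq : ∑ i ∈ S, (x i)^2 ≥ 1/(l:ℝ) := by
    have hc := sq_sum_le_card_mul_sum_sq (s := S) (f := x)
    rw [hSx] at hc
    have hq0 : (0:ℝ) ≤ ∑ i ∈ S, (x i)^2 := Finset.sum_nonneg fun i _ => sq_nonneg _
    have hcl' : (S.card : ℝ) ≤ (l : ℝ) := by exact_mod_cast hcardS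
    have hlpos : (0:ℝ) < (l:ℝ) := by exact_mod_cast hl
    rw [ge_iff_le, div_le_iff₀ hlpos]
    nlinarith
  rw [h1]
  calc ∑ e ∈ E.filter (fun e => e ⊆ S), ∏ i ∈ e, x i
      ≤ ∑ e ∈ S.powersetCard 2, ∏ i ∈ e, x i := h2
    _ = ((∑ i ∈ S, x i)^2 - ∑ i ∈ S, (x i)^2)/2 := h3
    _ ≤ (1/2 : ℝ) * (1 - 1/(l:ℝ)) := by rw [hSx]; nlinarith [hq]

lemma upper_bound {n l : ℕ} {E : Finset (Finset ℕ)} (hG : isRGraph 2 n E)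
    (hl : 1 ≤ l)
    (hmax : ∀ T ⊆ Finset.Icc 1 n, hasCliqueOn E 2 T → T.card ≤ l) :
    ∀ m (x : ℕ → ℝ), simplexOn n x → suppCard n x ≤ m →
      lagF E x ≤ (1/2 : ℝ) * (1 - 1/(l:ℝ)) := by
  intro m
  induction m with
  | zero =>
    intro x hx hm
    exfalso
    obtain ⟨hpos, hsum, hout⟩ := hx
    have : ∃ i ∈ Finset.Icc 1 n, x i ≠ 0 :=
      Finset.exists_ne_zero_of_sum_ne_zero (by rw [hsum]; norm_num)
    obtain ⟨i, hi, hxi⟩ := this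
    have : i ∈ (Finset.Icc 1 n).filter (fun i => x i ≠ 0) := Finset.mem_filter.2 ⟨hi, hxi⟩
    have h2 := Finset.card_pos.2 ⟨i, this⟩
    simp only [suppCard] at hm
    omega
  | succ m ih =>
    intro x hx hm
    by_cases hcl : ∀ a ∈ (Finset.Icc 1 n).filter (fun i => x i ≠ 0),
        ∀ b ∈ (Finset.Icc 1 n).filter (fun i => x i ≠ 0), a ≠ b → ({a,b} : Finset ℕ) ∈ E
    · exact clique_bound hG hl hmax hx hcl
    · push_neg at hcl
      obtain ⟨a, ha, b, hb, hab, hE⟩ := hcl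
      -- choose direction
      obtain ⟨i, j, hi, hj, hij, hEij, hw⟩ :
          ∃ i j, i ∈ (Finset.Icc 1 n).filter (fun i => x i ≠ 0) ∧
            j ∈ (Finset.Icc 1 n).filter (fun i => x i ≠ 0) ∧ i ≠ j ∧
            ({i,j} : Finset ℕ) ∉ E ∧ wsum E x j ≤ wsum E x i := by
        rcases le_total (wsum E x a) (wsum E x b) with h | h
        · exact ⟨b, a, hb, ha, hab.symm, by rwa [Finset.pair_comm], h⟩
        · exact ⟨a, b, ha, hb, hab, hE, h⟩
      rw [Finset.mem_filter] at hi hj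
      set y := Function.update (Function.update x i (x i + x j)) j 0 with hy
      have hyi : y i = x i + x j := by simp [hy, Function.update, hij]
      have hyj : y j = 0 := by simp [hy]
      have hyk : ∀ k, k ≠ i → k ≠ j → y k = x k := by
        intro k hki hkj; simp [hy, Function.update, hki, hkj]
      obtain ⟨hpos, hsum, hout⟩ := hx
      have hysimp : simplexOn n y := by
        refine ⟨?_, ?_, ?_⟩
        · intro k
          rcases eq_or_ne k j with rfl | hkj
          · rw [hyj]
          · rcases eq_or_ne k i with rfl | hki
            · rw [hyi]; exact add_nonneg (hpos _) (hpos _)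
            · rw [hyk k hki hkj]; exact hpos k
        · have hiIcc : i ∈ Finset.Icc 1 n \ {j} :=
            Finset.mem_sdiff.2 ⟨hi.1, by simp [hij]⟩
          rw [hy, Finset.sum_update_of_mem hj.1, Finset.sum_update_of_mem hiIcc]
          have : ∑ k ∈ Finset.Icc 1 n, x k
              = x j + (x i + ∑ k ∈ (Finset.Icc 1 n \ {j}) \ {i}, x k) := by
            rw [← Finset.sum_eq_add_sum_sdiff_singleton_of_mem hiIcc x,
              ← Finset.sum_eq_add_sum_sdiff_singleton_of_mem hj.1 x]
          rw [hsum] at this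
          linarith
        · intro k hk
          have hki : k ≠ i := fun h => hk (h ▸ hi.1)
          have hkj : k ≠ j := fun h => hk (h ▸ hj.1)
          rw [hyk k hki hkj]; exact hout k hk
      have hsupp : suppCard n y < suppCard n x := by
        have hsub : (Finset.Icc 1 n).filter (fun k => y k ≠ 0)
            ⊆ ((Finset.Icc 1 n).filter (fun k => x k ≠ 0)).erase j := by
          intro k hk
          rw [Finset.mem_filter] at hk
          have hkj : k ≠ j := fun h => hk.2 (h ▸ hyj)
          refine Finset.mem_erase.2 ⟨hkj, Finset.mem_filter.2 ⟨hk.1, ?_⟩⟩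
          rcases eq_or_ne k i with rfl | hki
          · exact hi.2
          · rw [← hyk k hki hkj]; exact hk.2
        calc suppCard n y ≤ (((Finset.Icc 1 n).filter (fun k => x k ≠ 0)).erase j).card :=
              Finset.card_le_card hsub
          _ < suppCard n x := Finset.card_erase_lt_of_mem (Finset.mem_filter.2 hj)
      have hmove := move_lemma hG hij hEij x
      have hyle := ih y hysimp (by omega)
      rw [← hy] at hmove
      have hxj : 0 ≤ x j := hpos j
      nlinarith [hmove, hyle, hxj, hw]

lemma MS_core {n l : ℕ} {E : Finset (Finset ℕ)} (hG : isRGraph 2 n E) (hl : 1 ≤ l)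
    (hT : ∃ T ⊆ Finset.Icc 1 n, T.card = l ∧ hasCliqueOn E 2 T)
    (hmax : ∀ T ⊆ Finset.Icc 1 n, hasCliqueOn E 2 T → T.card ≤ l) :
    lagr n E = (1/2 : ℝ) * (1 - 1/(l:ℝ)) := by
  obtain ⟨T, hTsub, hTcard, hTcl⟩ := hT
  have hl0 : ((l:ℝ)) ≠ 0 := by positivity
  set x : ℕ → ℝ := fun i => if i ∈ T then (1/(l:ℝ)) else 0 with hxdef
  have hlpos : (0:ℝ) < (l:ℝ) := by exact_mod_cast hl
  have hsumT : ∑ i ∈ T, x i = 1 := by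
    rw [hxdef]
    simp only [Finset.sum_ite_mem, Finset.inter_self]
    rw [Finset.sum_const, hTcard, nsmul_eq_mul]
    field_simp
  have hsx : simplexOn n x := by
    refine ⟨fun i => ?_, ?_, fun i hi => ?_⟩
    · rw [hxdef]; dsimp only; split <;> positivity
    · rw [hxdef]
      simp only [Finset.sum_ite_mem]
      rw [Finset.inter_eq_right.2 hTsub, Finset.sum_const, hTcard, nsmul_eq_mul]
      field_simp
    · rw [hxdef]; dsimp only
      rw [if_neg (fun h => hi (hTsub h))]
  have hfilter : E.filter (fun e => e ⊆ T) = T.powersetCard 2 := by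
    ext e
    rw [Finset.mem_filter, Finset.mem_powersetCard]
    constructor
    · rintro ⟨he, hsub⟩; exact ⟨hsub, (hG e he).1⟩
    · rintro ⟨hsub, hcard⟩; exact ⟨hTcl e hsub hcard, hsub⟩
  have hval : lagF E x = (1/2 : ℝ) * (1 - 1/(l:ℝ)) := by
    rw [lagF, ← Finset.sum_filter_of_ne (p := fun e => e ⊆ T)
      (fun e _ hne k hk => by
        by_contra hkT
        exact hne (Finset.prod_eq_zero hk (by rw [hxdef]; dsimp only; rw [if_neg hkT]))),
      hfilter, pairs_id, hsumT]
    have : ∑ i ∈ T, (x i)^2 = 1/(l:ℝ) := by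
      have : ∀ i ∈ T, (x i)^2 = 1/(l:ℝ)^2 := by
        intro i hi; rw [hxdef]; dsimp only; rw [if_pos hi]; ring
      rw [Finset.sum_congr rfl this, Finset.sum_const, hTcard, nsmul_eq_mul]
      field_simp
    rw [this]; ring
  have hub : ∀ v ∈ {v : ℝ | ∃ x : ℕ → ℝ, simplexOn n x ∧ v = lagF E x},
      v ≤ (1/2 : ℝ) * (1 - 1/(l:ℝ)) := by
    rintro v ⟨z, hz, rfl⟩
    exact upper_bound hG hl hmax (suppCard n z) z hz le_rfl
  have hmem : (1/2 : ℝ) * (1 - 1/(l:ℝ)) ∈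
      {v : ℝ | ∃ x : ℕ → ℝ, simplexOn n x ∧ v = lagF E x} := ⟨x, hsx, hval.symm⟩
  rw [lagr]
  exact le_antisymm (csSup_le ⟨_, hmem⟩ hub) (le_csSup ⟨_, hub⟩ hmem)

theorem motzkin_straus (n l : ℕ) (E : Finset (Finset ℕ))
    (hG : isRGraph 2 n E) (hl : 1 ≤ l)
    (hclique : ∃ T ⊆ Finset.Icc 1 n, T.card = l ∧ hasCliqueOn E 2 T)
    (hmax : ¬ ∃ T ⊆ Finset.Icc 1 n, T.card = l + 1 ∧ hasCliqueOn E 2 T) :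
    lagr n E = lagr l (completeR 2 l) ∧
      lagr n E = (1 / 2 : ℝ) * (1 - 1 / (l : ℝ)) := by
  have hmax' : ∀ T ⊆ Finset.Icc 1 n, hasCliqueOn E 2 T → T.card ≤ l := by
    intro T hTsub hTcl
    by_contra h
    push_neg at h
    obtain ⟨S, hSsub, hScard⟩ := T.exists_subset_card_eq (n := l+1) (by omega)
    exact hmax ⟨S, hSsub.trans hTsub, hScard,
      fun e he hc => hTcl e (he.trans hSsub) hc⟩
  have h1 : lagr n E = (1 / 2 : ℝ) * (1 - 1 / (l : ℝ)) :=
    MS_core hG hl hclique hmax'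
  have h2 : lagr l (completeR 2 l) = (1 / 2 : ℝ) * (1 - 1 / (l : ℝ)) := by
    refine MS_core ?_ hl ?_ ?_
    · intro e he
      rw [completeR, Finset.mem_powersetCard] at he
      exact ⟨he.2, he.1⟩
    · refine ⟨Finset.Icc 1 l, Finset.Subset.refl _, by simp, ?_⟩
      intro e he hc
      rw [completeR, Finset.mem_powersetCard]
      exact ⟨he, hc⟩
    · intro T hTsub _
      calc T.card ≤ (Finset.Icc 1 l).card := Finset.card_le_card hTsub
        _ = l := by simp
  exact ⟨h1.trans h2.symm, h1⟩
end

section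
/- (Frankl–Rödl) Let $G = (V,E)$ be an $r$-uniform hypergraph on $[n]$ and let $\vec{x} = (x_1,\dots,x_n)$ be an optimal weighting for $G$ with exactly $k \le n$ nonzero weights, chosen so that the number of nonzero weights is minimal among all optimal weightings. Then for every pair $\{i,j\} \in [k]^{(2)}$: (a) $\lambda(E_i, \vec{x}) = \lambda(E_j, \vec{x}) = r\,\lambda(G)$, and (b) there is an edge of $E$ containing both $i$ and $j$. -/
open Finset

lemma linkSum (E : Finset (Finset ℕ)) (i : ℕ) (x : ℕ → ℝ) :
    lagF (link E i) x = ∑ e ∈ E.filter (fun e => i ∈ e), ∏ m ∈ e.erase i, x m := by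
  rw [lagF, link, Finset.sum_image]
  intro a ha b hb h
  have := congrArg (insert i) h
  rwa [Finset.insert_erase (Finset.mem_filter.mp ha).2,
       Finset.insert_erase (Finset.mem_filter.mp hb).2] at this

lemma link2Sum (E : Finset (Finset ℕ)) (i j : ℕ) (hij : i ≠ j) (x : ℕ → ℝ) :
    lagF (link2 E i j) x
      = ∑ e ∈ E.filter (fun e => i ∈ e ∧ j ∈ e), ∏ m ∈ (e.erase i).erase j, x m := by
  rw [lagF, link2, Finset.sum_image]
  intro a ha b hb h
  obtain ⟨hai, haj⟩ := (Finset.mem_filter.mp ha).2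
  obtain ⟨hbi, hbj⟩ := (Finset.mem_filter.mp hb).2
  have h1 := congrArg (insert j) h
  rw [Finset.insert_erase (Finset.mem_erase.mpr ⟨hij.symm, haj⟩),
      Finset.insert_erase (Finset.mem_erase.mpr ⟨hij.symm, hbj⟩)] at h1
  have h2 := congrArg (insert i) h1
  rwa [Finset.insert_erase hai, Finset.insert_erase hbi] at h2

lemma prod_pert (x : ℕ → ℝ) (i j : ℕ) (hij : i ≠ j) (t : ℝ) (e : Finset ℕ) :
    ∏ m ∈ e, (x m + (if m = i then t else 0) - (if m = j then t else 0)) =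
      ∏ m ∈ e, x m
      + t * (if i ∈ e then ∏ m ∈ e.erase i, x m else 0)
      - t * (if j ∈ e then ∏ m ∈ e.erase j, x m else 0)
      - t^2 * (if i ∈ e ∧ j ∈ e then ∏ m ∈ (e.erase i).erase j, x m else 0) := by
  set y := fun m => x m + (if m = i then t else 0) - (if m = j then t else 0) with hy
  have hyi : y i = x i + t := by simp [hy, hij]
  have hyj : y j = x j - t := by simp [hy, hij.symm]
  have hyo : ∀ m, m ≠ i → m ≠ j → y m = x m := by intro m h1 h2; simp [hy, h1, h2]
  by_cases hi : i ∈ e <;> by_cases hj : j ∈ e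
  · have hji : j ∈ e.erase i := Finset.mem_erase.mpr ⟨hij.symm, hj⟩
    have hij' : i ∈ e.erase j := Finset.mem_erase.mpr ⟨hij, hi⟩
    have h2 : ∏ m ∈ (e.erase i).erase j, y m = ∏ m ∈ (e.erase i).erase j, x m := by
      refine Finset.prod_congr rfl fun m hm => ?_
      have hm' := Finset.mem_erase.mp hm
      exact hyo m (Finset.mem_erase.mp hm'.2).1 hm'.1
    have h1 : ∏ m ∈ e, y m = y i * (y j * ∏ m ∈ (e.erase i).erase j, x m) := by
      rw [← h2, Finset.mul_prod_erase _ _ hji, Finset.mul_prod_erase _ _ hi]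
    have h1x : ∏ m ∈ e, x m = x i * (x j * ∏ m ∈ (e.erase i).erase j, x m) := by
      rw [Finset.mul_prod_erase _ _ hji, Finset.mul_prod_erase _ _ hi]
    have h3 : ∏ m ∈ e.erase i, x m = x j * ∏ m ∈ (e.erase i).erase j, x m :=
      (Finset.mul_prod_erase _ _ hji).symm
    have h4 : ∏ m ∈ e.erase j, x m = x i * ∏ m ∈ (e.erase i).erase j, x m := by
      rw [← Finset.mul_prod_erase _ _ hij', Finset.erase_right_comm]
    rw [h1, hyi, hyj, h1x, if_pos hi, if_pos hj, if_pos ⟨hi, hj⟩, h3, h4]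
    ring
  · have h2 : ∏ m ∈ e.erase i, y m = ∏ m ∈ e.erase i, x m := by
      refine Finset.prod_congr rfl fun m hm => ?_
      have hm' := Finset.mem_erase.mp hm
      exact hyo m hm'.1 (fun h => hj (h ▸ hm'.2))
    have h1 : ∏ m ∈ e, y m = y i * ∏ m ∈ e.erase i, x m := by
      rw [← h2, Finset.mul_prod_erase _ _ hi]
    have h1x : ∏ m ∈ e, x m = x i * ∏ m ∈ e.erase i, x m :=
      (Finset.mul_prod_erase _ _ hi).symm
    rw [h1, hyi, h1x, if_pos hi, if_neg hj, if_neg (fun h => hj h.2)]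
    ring
  · have h2 : ∏ m ∈ e.erase j, y m = ∏ m ∈ e.erase j, x m := by
      refine Finset.prod_congr rfl fun m hm => ?_
      have hm' := Finset.mem_erase.mp hm
      exact hyo m (fun h => hi (h ▸ hm'.2)) hm'.1
    have h1 : ∏ m ∈ e, y m = y j * ∏ m ∈ e.erase j, x m := by
      rw [← h2, Finset.mul_prod_erase _ _ hj]
    have h1x : ∏ m ∈ e, x m = x j * ∏ m ∈ e.erase j, x m :=
      (Finset.mul_prod_erase _ _ hj).symm
    rw [h1, hyj, h1x, if_neg hi, if_pos hj, if_neg (fun h => hi h.1)]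
    ring
  · have h1 : ∏ m ∈ e, y m = ∏ m ∈ e, x m := by
      refine Finset.prod_congr rfl fun m hm => ?_
      exact hyo m (fun h => hi (h ▸ hm)) (fun h => hj (h ▸ hm))
    rw [h1, if_neg hi, if_neg hj, if_neg (fun h => hi h.1)]
    ring

lemma pert (E : Finset (Finset ℕ)) (x : ℕ → ℝ) (i j : ℕ) (hij : i ≠ j) (t : ℝ) :
    lagF E (fun m => x m + (if m = i then t else 0) - (if m = j then t else 0)) =
      lagF E x + t * lagF (link E i) x - t * lagF (link E j) x
        - t^2 * lagF (link2 E i j) x := by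
  have h : lagF E (fun m => x m + (if m = i then t else 0) - (if m = j then t else 0))
      = ∑ e ∈ E, (∏ m ∈ e, x m
        + t * (if i ∈ e then ∏ m ∈ e.erase i, x m else 0)
        - t * (if j ∈ e then ∏ m ∈ e.erase j, x m else 0)
        - t^2 * (if i ∈ e ∧ j ∈ e then ∏ m ∈ (e.erase i).erase j, x m else 0)) :=
    Finset.sum_congr rfl fun e _ => prod_pert x i j hij t e
  rw [h, linkSum, linkSum, link2Sum E i j hij, lagF]
  rw [Finset.sum_filter, Finset.sum_filter, Finset.sum_filter]
  rw [Finset.sum_sub_distrib, Finset.sum_sub_distrib, Finset.sum_add_distrib,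
      Finset.mul_sum, Finset.mul_sum, Finset.mul_sum]

lemma lag_le (n : ℕ) (E : Finset (Finset ℕ)) (y : ℕ → ℝ) (hy : simplexOn n y) :
    lagF E y ≤ lagr n E := by
  apply le_csSup
  · refine ⟨(E.card : ℝ), ?_⟩
    rintro v ⟨z, hz, rfl⟩
    have hz1 : ∀ m, z m ≤ 1 := by
      intro m
      by_cases hm : m ∈ Finset.Icc 1 n
      · calc z m ≤ ∑ i ∈ Finset.Icc 1 n, z i :=
              Finset.single_le_sum (fun i _ => hz.1 i) hm
          _ = 1 := hz.2.1
      · rw [hz.2.2 m hm]; norm_num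
    calc lagF E z ≤ ∑ e ∈ E, (1 : ℝ) :=
          Finset.sum_le_sum fun e _ =>
            Finset.prod_le_one (fun m _ => hz.1 m) (fun m _ => hz1 m)
      _ = E.card := by simp
  · exact ⟨y, hy, rfl⟩

lemma euler (r n : ℕ) (E : Finset (Finset ℕ)) (hG : isRGraph r n E) (x : ℕ → ℝ) :
    ∑ i ∈ Finset.Icc 1 n, x i * lagF (link E i) x = (r : ℝ) * lagF E x := by
  have h1 : ∀ i, x i * lagF (link E i) x
      = ∑ e ∈ E, (if i ∈ e then ∏ m ∈ e, x m else 0) := by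
    intro i
    rw [linkSum, Finset.mul_sum, Finset.sum_filter]
    refine Finset.sum_congr rfl fun e _ => ?_
    split_ifs with h
    · exact Finset.mul_prod_erase e x h
    · rfl
  simp_rw [h1]
  rw [Finset.sum_comm, lagF, Finset.mul_sum]
  refine Finset.sum_congr rfl fun e he => ?_
  rw [Finset.sum_ite_mem, Finset.inter_eq_right.mpr (hG e he).2,
      Finset.sum_const, (hG e he).1, nsmul_eq_mul]

lemma pert_simplex (n : ℕ) (x : ℕ → ℝ) (hx : simplexOn n x) (i j : ℕ)
    (hi : i ∈ Finset.Icc 1 n) (hj : j ∈ Finset.Icc 1 n) (hij : i ≠ j)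
    (t : ℝ) (ht0 : 0 ≤ t) (htj : t ≤ x j) :
    simplexOn n (fun m => x m + (if m = i then t else 0) - (if m = j then t else 0)) := by
  obtain ⟨hx0, hx1, hxz⟩ := hx
  refine ⟨?_, ?_, ?_⟩
  · intro m
    beta_reduce
    rcases eq_or_ne m i with rfl | hmi
    · rw [if_pos rfl, if_neg hij]
      linarith [hx0 m]
    · rw [if_neg hmi]
      rcases eq_or_ne m j with rfl | hmj
      · rw [if_pos rfl]; linarith
      · rw [if_neg hmj]; simpa using hx0 m
  · have h : ∑ m ∈ Finset.Icc 1 n, (x m + (if m = i then t else 0) - (if m = j then t else 0))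
        = (∑ m ∈ Finset.Icc 1 n, x m)
          + (∑ m ∈ Finset.Icc 1 n, if m = i then t else 0)
          - (∑ m ∈ Finset.Icc 1 n, if m = j then t else 0) := by
      rw [Finset.sum_sub_distrib, Finset.sum_add_distrib]
    rw [h, Finset.sum_ite_eq' _ i, Finset.sum_ite_eq' _ j, if_pos hi, if_pos hj, hx1]
    ring
  · intro m hm
    have hmi : m ≠ i := fun h => hm (h ▸ hi)
    have hmj : m ≠ j := fun h => hm (h ▸ hj)
    simp [hmi, hmj, hxz m hm]

theorem frankl_rodl (r n k : ℕ) (E : Finset (Finset ℕ)) (x : ℕ → ℝ)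
    (hG : isRGraph r n E) (hk : k ≤ n)
    (hopt : isMinOptimal n E x)
    (hsupp : ∀ i ∈ Finset.Icc 1 n, (x i ≠ 0 ↔ i ∈ Finset.Icc 1 k)) :
    ∀ i ∈ Finset.Icc 1 k, ∀ j ∈ Finset.Icc 1 k, i ≠ j →
      (lagF (link E i) x = (r : ℝ) * lagr n E ∧
        lagF (link E j) x = (r : ℝ) * lagr n E ∧
        ∃ e ∈ E, i ∈ e ∧ j ∈ e) := by
  obtain ⟨⟨⟨hx0, hx1, hxz⟩, hxv⟩, hmin⟩ := hopt
  have hsub : Finset.Icc 1 k ⊆ Finset.Icc 1 n := Finset.Icc_subset_Icc_right hk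
  have hpos : ∀ i ∈ Finset.Icc 1 k, 0 < x i := fun i hi =>
    lt_of_le_of_ne (hx0 i) (Ne.symm ((hsupp i (hsub hi)).mpr hi))
  have hxs : simplexOn n x := ⟨hx0, hx1, hxz⟩
  -- Step 1: link values are all equal on [k]
  have key : ∀ i ∈ Finset.Icc 1 k, ∀ j ∈ Finset.Icc 1 k, i ≠ j →
      lagF (link E i) x ≤ lagF (link E j) x := by
    intro i hi j hj hij
    by_contra hlt
    push_neg at hlt
    set d := lagF (link E i) x - lagF (link E j) x with hd
    have hd0 : 0 < d := sub_pos.mpr hlt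
    set c := lagF (link2 E i j) x with hc
    have hc0 : 0 ≤ c := Finset.sum_nonneg fun A _ => Finset.prod_nonneg fun m _ => hx0 m
    set t := min (x j) (d / (c + 1)) with ht
    have ht0 : 0 < t := lt_min (hpos j hj) (div_pos hd0 (by linarith))
    have htj : t ≤ x j := min_le_left _ _
    have htd : t * (c + 1) ≤ d := by
      rw [← le_div_iff₀ (by linarith : (0:ℝ) < c + 1)]
      exact min_le_right _ _
    have hys : simplexOn n (fun m => x m + (if m = i then t else 0) - (if m = j then t else 0)) :=
      pert_simplex n x hxs i j (hsub hi) (hsub hj) hij t ht0.le htj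
    have hle := lag_le n E _ hys
    rw [pert E x i j hij t, hxv] at hle
    nlinarith [mul_le_mul_of_nonneg_left htd ht0.le, mul_pos ht0 ht0]
  have keq : ∀ i ∈ Finset.Icc 1 k, ∀ j ∈ Finset.Icc 1 k,
      lagF (link E i) x = lagF (link E j) x := by
    intro i hi j hj
    rcases eq_or_ne i j with rfl | hij
    · rfl
    · exact le_antisymm (key i hi j hj hij) (key j hj i hi hij.symm)
  -- Step 2: the common value is r * lagr n E
  have hsum1 : ∑ m ∈ Finset.Icc 1 k, x m = 1 := by
    rw [← hx1]
    exact Finset.sum_subset hsub fun m hm hmk =>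
      not_not.mp fun h => hmk ((hsupp m hm).mp h)
  have hval : ∀ i ∈ Finset.Icc 1 k, lagF (link E i) x = (r : ℝ) * lagr n E := by
    intro i hi
    have he := euler r n E hG x
    have h2 : ∑ m ∈ Finset.Icc 1 n, x m * lagF (link E m) x
        = ∑ m ∈ Finset.Icc 1 k, x m * lagF (link E m) x := by
      symm
      refine Finset.sum_subset hsub fun m hm hmk => ?_
      rw [not_not.mp fun h => hmk ((hsupp m hm).mp h), zero_mul]
    have h3 : ∑ m ∈ Finset.Icc 1 k, x m * lagF (link E m) x
        = ∑ m ∈ Finset.Icc 1 k, x m * lagF (link E i) x :=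
      Finset.sum_congr rfl fun m hm => by rw [keq m hm i hi]
    rw [h2, h3, ← Finset.sum_mul, hsum1, one_mul, hxv] at he
    exact he
  -- Step 3: conclude, with part (b) by contradiction
  intro i hi j hj hij
  refine ⟨hval i hi, hval j hj, ?_⟩
  by_contra hne
  push_neg at hne
  have hl2 : lagF (link2 E i j) x = 0 := by
    have h0 : E.filter (fun e => i ∈ e ∧ j ∈ e) = ∅ :=
      Finset.filter_false_of_mem fun e he h => (hne e he h.1) h.2
    rw [link2, h0, Finset.image_empty, lagF, Finset.sum_empty]
  set t := x j with ht
  have hys : simplexOn n (fun m => x m + (if m = i then t else 0) - (if m = j then t else 0)) :=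
    pert_simplex n x hxs i j (hsub hi) (hsub hj) hij t (hx0 j) le_rfl
  have hveq : lagF E (fun m => x m + (if m = i then t else 0) - (if m = j then t else 0))
      = lagr n E := by
    rw [pert E x i j hij t, hl2, hval i hi, hval j hj, hxv]
    ring
  -- support of the new weighting
  have hsx : ((Finset.Icc 1 n).filter fun m => x m ≠ 0) = Finset.Icc 1 k := by
    ext m
    simp only [Finset.mem_filter]
    constructor
    · rintro ⟨hm, hne'⟩; exact (hsupp m hm).mp hne'
    · intro hm; exact ⟨hsub hm, (hsupp m (hsub hm)).mpr hm⟩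
  have hsy : ((Finset.Icc 1 n).filter
        fun m => (fun m => x m + (if m = i then t else 0) - (if m = j then t else 0)) m ≠ 0)
      = (Finset.Icc 1 k).erase j := by
    ext m
    simp only [Finset.mem_filter, Finset.mem_erase]
    constructor
    · rintro ⟨hm, hne'⟩
      have hmj : m ≠ j := by
        rintro rfl
        apply hne'
        rw [if_neg (fun h => hij h.symm), if_pos rfl]
        ring
      refine ⟨hmj, ?_⟩
      rcases eq_or_ne m i with rfl | hmi
      · exact hi
      · rw [if_neg hmi, if_neg hmj] at hne'
        simp only [add_zero, sub_zero] at hne'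
        exact (hsupp m hm).mp hne'
    · rintro ⟨hmj, hmk⟩
      refine ⟨hsub hmk, ?_⟩
      beta_reduce
      rcases eq_or_ne m i with rfl | hmi
      · rw [if_pos rfl, if_neg hij]
        have := hpos m hmk
        have := hpos j hj
        intro h
        simp only [sub_zero] at h
        linarith
      · rw [if_neg hmi, if_neg hmj]
        simpa using (hsupp m (hsub hmk)).mpr hmk
  have hk1 : 1 ≤ k := (Finset.mem_Icc.mp hj).1.trans (Finset.mem_Icc.mp hj).2
  have hlt : suppCard n (fun m => x m + (if m = i then t else 0) - (if m = j then t else 0))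
      < suppCard n x := by
    rw [suppCard, suppCard, hsx, hsy, Finset.card_erase_of_mem hj, Nat.card_Icc]
    simp only [Nat.add_sub_cancel]
    omega
  have := hmin _ hys hlt
  rw [hveq] at this
  exact lt_irrefl _ this
end

section
/- There exists a left-compressed $r$-uniform hypergraph $G$ with $m$ edges such that $\lambda(G) = \lambda_m^r$, where $\lambda_m^r$ is the maximum Lagrangian over all $r$-graphs with $m$ edges. -/
open Finset

lemma simplexOn.le_one {n : ℕ} {x : ℕ → ℝ} (h : simplexOn n x) {i : ℕ} (hi : i ∈ Icc 1 n) :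
    x i ≤ 1 := by
  rw [← h.2.1]; exact single_le_sum (fun j _ => h.1 j) hi

lemma lagF_nonneg {E : Finset (Finset ℕ)} {x : ℕ → ℝ} (hx : ∀ i, 0 ≤ x i) : 0 ≤ lagF E x :=
  Finset.sum_nonneg fun e _ => Finset.prod_nonneg fun i _ => hx i

lemma prod_le_one' {n : ℕ} {x : ℕ → ℝ} (h : simplexOn n x) {e : Finset ℕ} (he : e ⊆ Icc 1 n) :
    ∏ i ∈ e, x i ≤ 1 :=
  Finset.prod_le_one (fun i _ => h.1 i) (fun i hi => h.le_one (he hi))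

lemma lagF_le_card {n : ℕ} {E : Finset (Finset ℕ)} {x : ℕ → ℝ} (h : simplexOn n x)
    (hE : ∀ e ∈ E, e ⊆ Icc 1 n) : lagF E x ≤ E.card := by
  calc lagF E x ≤ ∑ _e ∈ E, (1:ℝ) := Finset.sum_le_sum fun e he => prod_le_one' h (hE e he)
  _ = E.card := by simp

def lagrSet (n : ℕ) (E : Finset (Finset ℕ)) : Set ℝ :=
  {v : ℝ | ∃ x : ℕ → ℝ, simplexOn n x ∧ v = lagF E x}

lemma lagr_eq (n : ℕ) (E : Finset (Finset ℕ)) : lagr n E = sSup (lagrSet n E) := rfl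

lemma bddAbove_lagrSet {n : ℕ} {E : Finset (Finset ℕ)} (hE : ∀ e ∈ E, e ⊆ Icc 1 n) :
    BddAbove (lagrSet n E) := by
  refine ⟨E.card, fun v hv => ?_⟩
  obtain ⟨x, hx, rfl⟩ := hv
  exact lagF_le_card hx hE

def basicWt : ℕ → ℝ := fun i => if i = 1 then 1 else 0

lemma simplexOn_basicWt {n : ℕ} (hn : 1 ≤ n) : simplexOn n basicWt := by
  refine ⟨fun i => ?_, ?_, fun i hi => ?_⟩
  · unfold basicWt; positivity
  · rw [Finset.sum_eq_single 1]
    · simp [basicWt]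
    · intro b _ hb; simp [basicWt, hb]
    · intro h; simp [Finset.mem_Icc, hn] at h
  · simp only [Finset.mem_Icc, not_and, not_le] at hi
    unfold basicWt
    rcases Nat.eq_or_lt_of_le (Nat.zero_le i) with h | h
    · simp [← h]
    · have : i ≠ 1 := by omega
      simp [this]

lemma lagr_nonneg {n : ℕ} {E : Finset (Finset ℕ)} (hn : 1 ≤ n) (hE : ∀ e ∈ E, e ⊆ Icc 1 n) :
    0 ≤ lagr n E := by
  refine le_trans (lagF_nonneg (E := E) (x := basicWt) fun i => by unfold basicWt; positivity) ?_
  exact le_csSup (bddAbove_lagrSet hE) ⟨basicWt, simplexOn_basicWt hn, rfl⟩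

lemma lagr_le_lagr {n₁ n₂ : ℕ} {E₁ E₂ : Finset (Finset ℕ)} (hn₂ : 1 ≤ n₂)
    (hE₂ : ∀ e ∈ E₂, e ⊆ Icc 1 n₂)
    (h : ∀ x, simplexOn n₁ x → ∃ y, simplexOn n₂ y ∧ lagF E₁ x ≤ lagF E₂ y) :
    lagr n₁ E₁ ≤ lagr n₂ E₂ := by
  rcases Set.eq_empty_or_nonempty (lagrSet n₁ E₁) with hs | hs
  · rw [lagr_eq, hs, Real.sSup_empty]; exact lagr_nonneg hn₂ hE₂
  · rw [lagr_eq, lagr_eq]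
    refine csSup_le hs ?_
    rintro v ⟨x, hx, rfl⟩
    obtain ⟨y, hy, hle⟩ := h x hx
    exact hle.trans (le_csSup (bddAbove_lagrSet hE₂) ⟨y, hy, rfl⟩)
/-- Replace `j` by `i` in an edge. -/
def rep (i j : ℕ) (e : Finset ℕ) : Finset ℕ := insert i (e.erase j)

/-- The edges moved by the `ij`-compression. -/
def moved (i j : ℕ) (E : Finset (Finset ℕ)) : Finset (Finset ℕ) :=
  E.filter fun e => j ∈ e ∧ i ∉ e ∧ rep i j e ∉ E

/-- The `ij`-compression of a family of edges. -/
def comp (i j : ℕ) (E : Finset (Finset ℕ)) : Finset (Finset ℕ) :=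
  (E.filter fun e => ¬(j ∈ e ∧ i ∉ e ∧ rep i j e ∉ E)) ∪ (moved i j E).image (rep i j)

lemma mem_rep_self {i j : ℕ} {e : Finset ℕ} : i ∈ rep i j e := Finset.mem_insert_self _ _

lemma not_mem_rep {i j : ℕ} (hij : i ≠ j) {e : Finset ℕ} : j ∉ rep i j e := by
  simp [rep, hij.symm]

lemma rep_rep {i j : ℕ} {e : Finset ℕ} (hj : j ∈ e) (hi : i ∉ e) :
    rep j i (rep i j e) = e := by
  have h1 : (rep i j e).erase i = e.erase j := by
    rw [rep, Finset.erase_insert]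
    simp only [Finset.mem_erase]
    exact fun h => hi h.2
  rw [rep, h1, Finset.insert_erase hj]

lemma card_rep {i j : ℕ} {e : Finset ℕ} (hj : j ∈ e) (hi : i ∉ e) :
    (rep i j e).card = e.card := by
  rw [rep, Finset.card_insert_of_notMem (fun h => hi (Finset.mem_of_mem_erase h)),
    Finset.card_erase_of_mem hj]
  have : 1 ≤ e.card := Finset.card_pos.2 ⟨j, hj⟩
  omega

lemma rep_subset {i j n : ℕ} (hi : i ∈ Icc 1 n) {e : Finset ℕ} (he : e ⊆ Icc 1 n) :
    rep i j e ⊆ Icc 1 n := by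
  intro a ha
  rcases Finset.mem_insert.1 ha with rfl | h
  · exact hi
  · exact he (Finset.mem_of_mem_erase h)

lemma rep_injOn {i j : ℕ} {E : Finset (Finset ℕ)} :
    Set.InjOn (rep i j) ↑(moved i j E) := by
  intro a ha b hb hab
  simp only [moved, Finset.coe_filter, Set.mem_setOf_eq] at ha hb
  rw [← rep_rep ha.2.1 ha.2.2.1, hab, rep_rep hb.2.1 hb.2.2.1]

lemma disj_comp {i j : ℕ} {E : Finset (Finset ℕ)} :
    Disjoint (E.filter fun e => ¬(j ∈ e ∧ i ∉ e ∧ rep i j e ∉ E)) ((moved i j E).image (rep i j)) := by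
  rw [Finset.disjoint_left]
  intro a ha hb
  obtain ⟨e, he, rfl⟩ := Finset.mem_image.1 hb
  simp only [moved, Finset.mem_filter] at he
  exact he.2.2.2 (Finset.mem_filter.1 ha).1

lemma card_comp {i j : ℕ} {E : Finset (Finset ℕ)} : (comp i j E).card = E.card := by
  rw [comp, Finset.card_union_of_disjoint disj_comp, Finset.card_image_of_injOn rep_injOn, moved]
  have := Finset.card_filter_add_card_filter_not (s := E)
    (p := fun e => j ∈ e ∧ i ∉ e ∧ rep i j e ∉ E)
  omega

lemma comp_isRGraph {r n i j : ℕ} (hi : i ∈ Icc 1 n) {E : Finset (Finset ℕ)}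
    (hE : isRGraph r n E) : isRGraph r n (comp i j E) := by
  intro f hf
  rcases Finset.mem_union.1 hf with h | h
  · exact hE f (Finset.mem_filter.1 h).1
  · obtain ⟨e, he, rfl⟩ := Finset.mem_image.1 h
    simp only [moved, Finset.mem_filter] at he
    obtain ⟨heE, hje, hie, -⟩ := he
    obtain ⟨hc, hs⟩ := hE e heE
    exact ⟨by rw [card_rep hje hie, hc], rep_subset hi hs⟩

/-- Key inequality: if `x i ≥ x j` then compression does not decrease `lagF`. -/
lemma lagF_comp_ge {i j : ℕ} (hij : i ≠ j) {E : Finset (Finset ℕ)} {x : ℕ → ℝ}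
    (hx : ∀ k, 0 ≤ x k) (hxij : x j ≤ x i) :
    lagF E x ≤ lagF (comp i j E) x := by
  have key : ∀ e ∈ moved i j E, ∏ k ∈ e, x k ≤ ∏ k ∈ rep i j e, x k := by
    intro e he
    simp only [moved, Finset.mem_filter] at he
    obtain ⟨-, hje, hie, -⟩ := he
    have h1 : ∏ k ∈ e, x k = x j * ∏ k ∈ e.erase j, x k := (Finset.mul_prod_erase e x hje).symm
    have h2 : ∏ k ∈ rep i j e, x k = x i * ∏ k ∈ e.erase j, x k := by
      rw [rep, Finset.prod_insert (fun h => hie (Finset.mem_of_mem_erase h))]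
    rw [h1, h2]
    exact mul_le_mul_of_nonneg_right hxij (Finset.prod_nonneg fun k _ => hx k)
  rw [comp]
  simp only [lagF]
  rw [Finset.sum_union disj_comp, Finset.sum_image (fun a ha b hb h => rep_injOn ha hb h),
    ← Finset.sum_filter_add_sum_filter_not E (fun e => j ∈ e ∧ i ∉ e ∧ rep i j e ∉ E)]
  have hmv : E.filter (fun e => j ∈ e ∧ i ∉ e ∧ rep i j e ∉ E) = moved i j E := rfl
  rw [hmv, add_comm]
  exact add_le_add le_rfl (Finset.sum_le_sum key)
/-- Swap vertices `i` and `j` in an edge. -/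
def sw (i j : ℕ) (f : Finset ℕ) : Finset ℕ := f.map (Equiv.swap i j).toEmbedding

lemma mem_sw {i j a : ℕ} {f : Finset ℕ} : a ∈ sw i j f ↔ Equiv.swap i j a ∈ f := by
  rw [sw, Finset.mem_map_equiv, Equiv.symm_swap]

lemma sw_sw {i j : ℕ} {f : Finset ℕ} : sw i j (sw i j f) = f := by
  ext a; simp [mem_sw]

lemma sw_eq_self {i j : ℕ} {f : Finset ℕ} (h : i ∈ f ↔ j ∈ f) : sw i j f = f := by
  ext a; rw [mem_sw]
  rcases eq_or_ne a i with rfl | hai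
  · rw [Equiv.swap_apply_left]; tauto
  rcases eq_or_ne a j with rfl | haj
  · rw [Equiv.swap_apply_right]; tauto
  · rw [Equiv.swap_apply_of_ne_of_ne hai haj]

lemma sw_of_left {i j : ℕ} (hij : i ≠ j) {f : Finset ℕ} (hi : i ∈ f) (hj : j ∉ f) :
    sw i j f = rep j i f := by
  ext a; rw [mem_sw, rep, Finset.mem_insert, Finset.mem_erase]
  rcases eq_or_ne a i with rfl | hai
  · rw [Equiv.swap_apply_left]
    simp only [hij, false_or]
    constructor
    · intro h; exact absurd h hj
    · rintro ⟨h, -⟩; exact absurd rfl h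
  rcases eq_or_ne a j with rfl | haj
  · rw [Equiv.swap_apply_right]; simp [hi]
  · rw [Equiv.swap_apply_of_ne_of_ne hai haj]
    simp [haj, hai]

lemma sw_comm {i j : ℕ} {f : Finset ℕ} : sw i j f = sw j i f := by
  ext a; rw [mem_sw, mem_sw, Equiv.swap_comm]

lemma sw_of_right {i j : ℕ} (hij : i ≠ j) {f : Finset ℕ} (hj : j ∈ f) (hi : i ∉ f) :
    sw i j f = rep i j f := by
  rw [sw_comm]; exact sw_of_left hij.symm hj hi

/-- Swap vertices `i` and `j` in every edge. -/
def swF (i j : ℕ) (E : Finset (Finset ℕ)) : Finset (Finset ℕ) := E.image (sw i j)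

lemma mem_swF {i j : ℕ} {E : Finset (Finset ℕ)} {f : Finset ℕ} :
    f ∈ swF i j E ↔ sw i j f ∈ E := by
  constructor
  · rintro h
    obtain ⟨e, he, rfl⟩ := Finset.mem_image.1 h
    rwa [sw_sw]
  · intro h
    exact Finset.mem_image.2 ⟨sw i j f, h, sw_sw⟩

lemma lagF_swF {i j : ℕ} {E : Finset (Finset ℕ)} {x : ℕ → ℝ} :
    lagF (swF i j E) (fun k => x (Equiv.swap i j k)) = lagF E x := by
  rw [lagF, lagF, swF, Finset.sum_image]
  · refine Finset.sum_congr rfl fun e _ => ?_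
    rw [sw, Finset.prod_map]
    exact Finset.prod_congr rfl fun a _ => by simp
  · intro a _ b _ h
    rw [← sw_sw (i := i) (j := j) (f := a), h, sw_sw]

lemma simplexOn_swap {n i j : ℕ} (hi : i ∈ Icc 1 n) (hj : j ∈ Icc 1 n) {x : ℕ → ℝ}
    (hx : simplexOn n x) : simplexOn n (fun k => x (Equiv.swap i j k)) := by
  refine ⟨fun k => hx.1 _, ?_, fun k hk => ?_⟩
  · have hmap : (Icc 1 n).map (Equiv.swap i j).toEmbedding = Icc 1 n := by
      have : sw i j (Icc 1 n) = Icc 1 n := sw_eq_self (by simp [hi, hj])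
      exact this
    calc ∑ k ∈ Icc 1 n, x (Equiv.swap i j k)
        = ∑ k ∈ (Icc 1 n).map (Equiv.swap i j).toEmbedding, x k := by
          rw [Finset.sum_map]; rfl
    _ = 1 := by rw [hmap, hx.2.1]
  · have hki : k ≠ i := fun h => hk (h ▸ hi)
    have hkj : k ≠ j := fun h => hk (h ▸ hj)
    show x (Equiv.swap i j k) = 0
    rw [Equiv.swap_apply_of_ne_of_ne hki hkj]
    exact hx.2.2 k hk

lemma mem_comp {i j : ℕ} (hij : i ≠ j) {E : Finset (Finset ℕ)} {f : Finset ℕ} :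
    f ∈ comp i j E ↔
      (f ∈ E ∧ ¬(j ∈ f ∧ i ∉ f ∧ rep i j f ∉ E)) ∨
      (i ∈ f ∧ j ∉ f ∧ f ∉ E ∧ rep j i f ∈ E) := by
  rw [comp, moved]
  simp only [Finset.mem_union, Finset.mem_filter, Finset.mem_image]
  constructor
  · rintro (⟨h1, h2⟩ | ⟨e, ⟨heE, hje, hie, hrep⟩, rfl⟩)
    · exact Or.inl ⟨h1, h2⟩
    · exact Or.inr ⟨mem_rep_self, not_mem_rep hij, hrep, by rwa [rep_rep hje hie]⟩
  · rintro (⟨h1, h2⟩ | ⟨hif, hjf, hfE, hrepE⟩)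
    · exact Or.inl ⟨h1, h2⟩
    · exact Or.inr ⟨rep j i f, ⟨hrepE, mem_rep_self, not_mem_rep hij.symm,
        by rwa [rep_rep hif hjf]⟩, by rw [rep_rep hif hjf]⟩

lemma comp_swF {i j : ℕ} (hij : i ≠ j) {E : Finset (Finset ℕ)} :
    comp i j (swF i j E) = comp i j E := by
  ext f
  rw [mem_comp hij, mem_comp hij]
  by_cases hif : i ∈ f <;> by_cases hjf : j ∈ f
  · have h1 : sw i j f = f := sw_eq_self (by tauto)
    simp only [mem_swF, h1]
    tauto
  · -- i ∈ f, j ∉ f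
    have h1 : sw i j f = rep j i f := sw_of_left hij hif hjf
    have h2 : sw i j (rep j i f) = f := by
      rw [sw_of_right hij mem_rep_self (not_mem_rep hij.symm), rep_rep hif hjf]
    simp only [mem_swF, h1, h2]
    tauto
  · -- j ∈ f, i ∉ f
    have h1 : sw i j f = rep i j f := sw_of_right hij hjf hif
    have h2 : sw i j (rep i j f) = f := by
      rw [sw_of_left hij mem_rep_self (not_mem_rep hij), rep_rep hjf hif]
    simp only [mem_swF, h1, h2]
    tauto
  · have h1 : sw i j f = f := sw_eq_self (by tauto)
    simp only [mem_swF, h1]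
    tauto

lemma lagr_le_lagr_comp {n r i j : ℕ} (hij : i ≠ j) (hi : i ∈ Icc 1 n) (hj : j ∈ Icc 1 n)
    {E : Finset (Finset ℕ)} (hE : isRGraph r n E) :
    lagr n E ≤ lagr n (comp i j E) := by
  have hn : 1 ≤ n := le_trans (Finset.mem_Icc.1 hi).1 (Finset.mem_Icc.1 hi).2
  refine lagr_le_lagr hn (fun e he => (comp_isRGraph hi hE e he).2) ?_
  intro x hx
  rcases le_total (x j) (x i) with hle | hle
  · exact ⟨x, hx, lagF_comp_ge hij hx.1 hle⟩
  · refine ⟨fun k => x (Equiv.swap i j k), simplexOn_swap hi hj hx, ?_⟩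
    have h1 : lagF E x = lagF (swF i j E) (fun k => x (Equiv.swap i j k)) := lagF_swF.symm
    rw [h1, ← comp_swF hij (E := E)]
    refine lagF_comp_ge hij (fun k => hx.1 _) ?_
    simpa using hle
lemma stable_rep_mem {i j : ℕ} {E : Finset (Finset ℕ)} (hcomp : comp i j E = E)
    {e : Finset ℕ} (he : e ∈ E) (hj : j ∈ e) (hi : i ∉ e) : rep i j e ∈ E := by
  by_contra h
  rcases eq_or_ne i j with rfl | hij
  · exact h (by rwa [rep, Finset.insert_erase hj])
  · have hmem : e ∈ comp i j E := hcomp.symm ▸ he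
    rcases (mem_comp hij).1 hmem with ⟨-, h2⟩ | ⟨h1, -⟩
    · exact h2 ⟨hj, hi, h⟩
    · exact hi h1

lemma getD_set {l : List ℕ} {k u a : ℕ} (hu : u < l.length) :
    (l.set k a).getD u 0 = if k = u then a else l.getD u 0 := by
  have h1 : u < (l.set k a).length := by rw [List.length_set]; exact hu
  rw [List.getD_eq_getElem _ 0 h1, List.getElem_set h1, List.getD_eq_getElem _ 0 hu]

lemma leftCompressed_of_stable {E : Finset (Finset ℕ)}
    (hst : ∀ i j e, 1 ≤ i → i < j → e ∈ E → j ∈ e → i ∉ e → rep i j e ∈ E) :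
    leftCompressed E := by
  intro B₀ hB₀ A hA hdom₀
  suffices H : ∀ s B, B.sum id = s → B ∈ E → domBelow A B → A ∈ E from H _ B₀ rfl hB₀ hdom₀
  intro s
  induction s using Nat.strong_induction_on with
  | _ s IH =>
    intro B hsum hB hdom
    obtain ⟨hcard, hle⟩ := hdom
    set la := A.sort (· ≤ ·) with hla
    set lb := B.sort (· ≤ ·) with hlb
    have hlen : la.length = lb.length := by
      rw [hla, hlb, Finset.length_sort, Finset.length_sort, hcard]
    by_cases hAB : A = B
    · exact hAB ▸ hB
    have hex : ∃ k, k < la.length ∧ la.getD k 0 ≠ lb.getD k 0 := by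
      by_contra hc
      push_neg at hc
      apply hAB
      have heq : la = lb := by
        apply List.ext_getElem hlen
        intro n h1 h2
        have := hc n h1
        rwa [List.getD_eq_getElem la 0 h1, List.getD_eq_getElem lb 0 h2] at this
      rw [← Finset.sort_toFinset A (· ≤ ·), ← Finset.sort_toFinset B (· ≤ ·), ← hla, ← hlb, heq]
    classical
    obtain ⟨hklen, hkne⟩ := Nat.find_spec hex
    set k := Nat.find hex with hkdef
    have hmin : ∀ l, l < k → la.getD l 0 = lb.getD l 0 := by
      intro l hl
      have hml := Nat.find_min hex hl
      push_neg at hml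
      exact hml (lt_trans hl hklen)
    set a := la.getD k 0 with hadef
    set b := lb.getD k 0 with hbdef
    have hklenb : k < lb.length := hlen ▸ hklen
    have hab : a < b := lt_of_le_of_ne (hle k) hkne
    have hsa : la.Pairwise (· < ·) := (Finset.sortedLT_sort A).pairwise
    have hsb : lb.Pairwise (· < ·) := (Finset.sortedLT_sort B).pairwise
    have pa' : ∀ u v : ℕ, u < v → v < la.length → la.getD u 0 < la.getD v 0 := by
      intro u v huv hv
      rw [List.getD_eq_getElem la 0 (by omega), List.getD_eq_getElem la 0 hv]
      exact List.pairwise_iff_getElem.1 hsa u v (by omega) hv huv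
    have pb' : ∀ u v : ℕ, u < v → v < lb.length → lb.getD u 0 < lb.getD v 0 := by
      intro u v huv hv
      rw [List.getD_eq_getElem lb 0 (by omega), List.getD_eq_getElem lb 0 hv]
      exact List.pairwise_iff_getElem.1 hsb u v (by omega) hv huv
    have hnb : lb.Nodup := Finset.sort_nodup B _
    have hmemla : ∀ u : ℕ, u < la.length → la.getD u 0 ∈ A := by
      intro u hu
      rw [← Finset.mem_sort (· ≤ ·) (s := A), ← hla, List.getD_eq_getElem la 0 hu]
      exact List.getElem_mem hu
    have hmemlb : ∀ u : ℕ, u < lb.length → lb.getD u 0 ∈ B := by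
      intro u hu
      rw [← Finset.mem_sort (· ≤ ·) (s := B), ← hlb, List.getD_eq_getElem lb 0 hu]
      exact List.getElem_mem hu
    have hBmem : ∀ z ∈ B, ∃ u : ℕ, u < lb.length ∧ lb.getD u 0 = z := by
      intro z hz
      rw [← Finset.mem_sort (· ≤ ·) (s := B), ← hlb, List.mem_iff_getElem] at hz
      obtain ⟨u, hu, hzu⟩ := hz
      exact ⟨u, hu, by rwa [List.getD_eq_getElem lb 0 hu]⟩
    have haA : a ∈ A := hmemla k hklen
    have hbB : b ∈ B := hmemlb k hklenb
    have ha1 : 1 ≤ a := hA a haA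
    have haB : a ∉ B := by
      intro haB
      obtain ⟨l, hl, hbl⟩ := hBmem a haB
      rcases lt_trichotomy l k with h | rfl | h
      · have h1 : la.getD l 0 = lb.getD l 0 := hmin l h
        have h2 : la.getD l 0 < la.getD k 0 := pa' l k h hklen
        omega
      · omega
      · have h2 : lb.getD k 0 < lb.getD l 0 := pb' k l h hl
        omega
    -- the replaced edge
    have hB' : rep a b B ∈ E := hst a b B ha1 hab hB hbB haB
    have haeB : a ∉ B.erase b := fun h => haB (Finset.mem_of_mem_erase h)
    have hsum1 : b + ∑ z ∈ B.erase b, id z = B.sum id := Finset.add_sum_erase B id hbB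
    have hsum2 : (rep a b B).sum id = a + ∑ z ∈ B.erase b, id z := by
      rw [rep, Finset.sum_insert haeB]
      rfl
    -- the new sorted list
    set c := lb.set k a with hcdef
    have hclen : c.length = lb.length := List.length_set
    have hgdc : ∀ u : ℕ, u < lb.length → c.getD u 0 = if k = u then a else lb.getD u 0 :=
      fun u hu => getD_set hu
    have hsc : c.Pairwise (· < ·) := by
      rw [List.pairwise_iff_getElem]
      intro u v hu hv huv
      rw [hclen] at hu hv
      rw [← List.getD_eq_getElem c 0 (by omega), ← List.getD_eq_getElem c 0 (by omega),
        hgdc u hu, hgdc v hv]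
      rcases eq_or_ne k u with rfl | hku <;> rcases eq_or_ne k v with rfl | hkv
      · omega
      · rw [if_pos rfl, if_neg hkv]
        have h3 : lb.getD k 0 < lb.getD v 0 := pb' k v huv hv
        omega
      · rw [if_neg hku, if_pos rfl]
        have h1 : la.getD u 0 = lb.getD u 0 := hmin u huv
        have h2 : la.getD u 0 < la.getD k 0 := pa' u k huv hklen
        omega
      · rw [if_neg hku, if_neg hkv]
        exact pb' u v huv hv
    have hnc : c.Nodup := hsc.nodup
    have hcfin : c.toFinset = rep a b B := by
      ext z
      rw [List.mem_toFinset, rep, Finset.mem_insert, Finset.mem_erase, List.mem_iff_getElem]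
      constructor
      · rintro ⟨l, hl, rfl⟩
        rw [← List.getD_eq_getElem c 0 hl]
        rw [hclen] at hl
        rw [hgdc l hl]
        rcases eq_or_ne k l with rfl | hkl
        · rw [if_pos rfl]
          exact Or.inl rfl
        · rw [if_neg hkl]
          refine Or.inr ⟨?_, hmemlb l hl⟩
          intro h
          have h2 : lb.getD l 0 = lb.getD k 0 := h
          rcases lt_or_gt_of_ne hkl with h' | h'
          · have := pb' k l h' hl
            omega
          · have := pb' l k h' hklenb
            omega
      · rintro (rfl | ⟨hzb, hzB⟩)
        · refine ⟨k, by omega, ?_⟩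
          rw [← List.getD_eq_getElem c 0 (by omega), hgdc k hklenb, if_pos rfl]
        · obtain ⟨l, hl, rfl⟩ := hBmem z hzB
          have hkl : k ≠ l := fun h => hzb (h ▸ rfl)
          refine ⟨l, by omega, ?_⟩
          rw [← List.getD_eq_getElem c 0 (by omega), hgdc l hl, if_neg hkl]
    have hsort' : (rep a b B).sort (· ≤ ·) = c := by
      refine List.Perm.eq_of_pairwise' (Finset.pairwise_sort _ _) ?_
        (List.perm_of_nodup_nodup_toFinset_eq (Finset.sort_nodup _ _) hnc
          (by rw [Finset.sort_toFinset, hcfin]))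
      exact List.Pairwise.imp le_of_lt hsc
    have hdom' : domBelow A (rep a b B) := by
      refine ⟨by rw [card_rep hbB haB, hcard], fun k' => ?_⟩
      rw [hsort', ← hla]
      by_cases hk' : k' < lb.length
      · rw [List.getD_eq_getElem c 0 (by omega), ← List.getD_eq_getElem c 0 (by omega),
          hgdc k' hk']
        rcases eq_or_ne k k' with rfl | hkk'
        · rw [if_pos rfl]
        · rw [if_neg hkk']
          exact hle k'
      · rw [List.getD_eq_default c 0 (by omega), List.getD_eq_default la 0 (by omega)]
    exact IH ((rep a b B).sum id) (by omega) (rep a b B) rfl hB' hdom'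
/-- Weight used to show compression terminates. -/
def wt (E : Finset (Finset ℕ)) : ℕ := ∑ e ∈ E, ∑ i ∈ e, 2 ^ i

lemma wt_comp_lt {i j : ℕ} (hij : i < j) {E : Finset (Finset ℕ)}
    (hne : comp i j E ≠ E) : wt (comp i j E) < wt E := by
  have hmv : (moved i j E).Nonempty := by
    rcases Finset.eq_empty_or_nonempty (moved i j E) with h | h
    · exfalso
      apply hne
      rw [comp, h, Finset.image_empty, Finset.union_empty, Finset.filter_eq_self]
      intro e heE hmem
      have : e ∈ moved i j E := Finset.mem_filter.2 ⟨heE, hmem⟩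
      rw [h] at this
      exact absurd this (Finset.notMem_empty e)
    · exact h
  have hkey : ∀ e ∈ moved i j E, ∑ u ∈ rep i j e, 2 ^ u < ∑ u ∈ e, 2 ^ u := by
    intro e he
    obtain ⟨-, hje, hie, -⟩ := Finset.mem_filter.1 he
    have h1 : ∑ u ∈ rep i j e, 2 ^ u = 2 ^ i + ∑ u ∈ e.erase j, 2 ^ u := by
      rw [rep, Finset.sum_insert (fun h => hie (Finset.mem_of_mem_erase h))]
    have h2 : 2 ^ j + ∑ u ∈ e.erase j, 2 ^ u = ∑ u ∈ e, 2 ^ u :=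
      Finset.add_sum_erase e (fun u => 2 ^ u) hje
    have h3 : (2:ℕ) ^ i < 2 ^ j := Nat.pow_lt_pow_right one_lt_two hij
    omega
  rw [wt, wt, comp, Finset.sum_union disj_comp,
    Finset.sum_image (fun a ha b hb h => rep_injOn ha hb h),
    ← Finset.sum_filter_add_sum_filter_not E (fun e => j ∈ e ∧ i ∉ e ∧ rep i j e ∉ E)]
  have hmveq : E.filter (fun e => j ∈ e ∧ i ∉ e ∧ rep i j e ∉ E) = moved i j E := rfl
  rw [hmveq]
  have := Finset.sum_lt_sum_of_nonempty hmv hkey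
  omega

lemma completeR_card_ge (r m : ℕ) (hr : 1 ≤ r) (hm : 1 ≤ m) :
    m ≤ (completeR r (r * m + 1)).card := by
  obtain ⟨r', rfl⟩ : ∃ r', r = r' + 1 := ⟨r - 1, by omega⟩
  have hx1 : r' * 1 ≤ r' * m := Nat.mul_le_mul_left _ hm
  rw [Nat.mul_one] at hx1
  have hx2 : (r' + 1) * m = r' * m + m := by ring
  set G₀ : Finset (Finset ℕ) := (Icc 1 m).image (fun t => insert (r' + t) (Icc 1 r'))
    with hG₀
  have hnotmem : ∀ t : ℕ, 1 ≤ t → (r' + t) ∉ Icc 1 r' := by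
    intro t ht h
    rw [Finset.mem_Icc] at h
    omega
  have hinj : ∀ t ∈ Icc 1 m, ∀ t' ∈ Icc 1 m,
      insert (r' + t) (Icc 1 r') = insert (r' + t') (Icc 1 r') → t = t' := by
    intro t ht t' ht' h
    rw [Finset.mem_Icc] at ht ht'
    have h1 : (r' + t) ∈ insert (r' + t') (Icc 1 r') := by
      rw [← h]; exact Finset.mem_insert_self _ _
    rcases Finset.mem_insert.1 h1 with h2 | h2
    · omega
    · exact absurd h2 (hnotmem t ht.1)
  have hcard : G₀.card = m := by
    rw [hG₀, Finset.card_image_of_injOn (fun a ha b hb h => hinj a ha b hb h), Nat.card_Icc]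
    omega
  have hsub : G₀ ⊆ completeR (r' + 1) ((r' + 1) * m + 1) := by
    intro f hf
    obtain ⟨t, ht, rfl⟩ := Finset.mem_image.1 hf
    rw [Finset.mem_Icc] at ht
    rw [completeR, Finset.mem_powersetCard]
    constructor
    · intro z hz
      rw [Finset.mem_Icc, hx2]
      rcases Finset.mem_insert.1 hz with rfl | hz2
      · omega
      · rw [Finset.mem_Icc] at hz2
        omega
    · rw [Finset.card_insert_of_notMem (hnotmem t ht.1), Nat.card_Icc]
      omega
  calc m = G₀.card := hcard.symm
  _ ≤ _ := Finset.card_le_card hsub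

lemma exists_good_relabel {r m n' : ℕ} (hr : 1 ≤ r) {E' : Finset (Finset ℕ)}
    (hE' : isRGraph r n' E') (hc : E'.card = m) :
    ∃ E ∈ (completeR r (r * m + 1)).powersetCard m, lagr n' E' ≤ lagr (r * m + 1) E := by
  classical
  set N := r * m + 1 with hN
  set V : Finset ℕ := E'.biUnion id with hV
  have hVsub : V ⊆ Icc 1 n' := by
    intro v hv
    obtain ⟨e, he, hve⟩ := Finset.mem_biUnion.1 hv
    exact (hE' e he).2 hve
  have hVcard : V.card ≤ r * m := by
    calc V.card ≤ ∑ e ∈ E', (id e).card := Finset.card_biUnion_le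
    _ = ∑ e ∈ E', r := Finset.sum_congr rfl fun e he => (hE' e he).1
    _ = m * r := by rw [Finset.sum_const, hc, smul_eq_mul]
    _ = r * m := Nat.mul_comm m r
  set lv := V.sort (· ≤ ·) with hlv
  set φ : ℕ → ℕ := fun v => lv.idxOf v + 1 with hφ
  set ψ : ℕ → ℕ := fun u => lv.getD (u - 1) 0 with hψ
  have hlvlen : lv.length = V.card := Finset.length_sort _
  have hψφ : ∀ v ∈ V, ψ (φ v) = v := by
    intro v hv
    have hmem : v ∈ lv := by rw [hlv, Finset.mem_sort]; exact hv
    have hlt : lv.idxOf v < lv.length := List.idxOf_lt_length_iff.2 hmem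
    show lv.getD (lv.idxOf v + 1 - 1) 0 = v
    rw [Nat.add_sub_cancel, List.getD_eq_getElem lv 0 hlt, List.getElem_idxOf]
  have hφmem : ∀ v ∈ V, φ v ∈ Icc 1 (r * m) := by
    intro v hv
    have hmem : v ∈ lv := by rw [hlv, Finset.mem_sort]; exact hv
    have hlt : lv.idxOf v < lv.length := List.idxOf_lt_length_iff.2 hmem
    have hφv : φ v = lv.idxOf v + 1 := rfl
    rw [Finset.mem_Icc, hφv]
    omega
  have hφinj : Set.InjOn φ ↑V := by
    intro u hu v hv h
    rw [← hψφ u hu, ← hψφ v hv, h]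
  have hesub : ∀ e ∈ E', e ⊆ V := by
    intro e he v hv
    exact Finset.mem_biUnion.2 ⟨e, he, hv⟩
  have himginv : ∀ e ∈ E', (e.image φ).image ψ = e := by
    intro e he
    rw [Finset.image_image]
    have : e.image (ψ ∘ φ) = e.image id :=
      Finset.image_congr fun v hv => hψφ v (hesub e he hv)
    rw [this, Finset.image_id]
  set E : Finset (Finset ℕ) := E'.image (fun e => e.image φ) with hE
  have hEinj : ∀ e₁ ∈ E', ∀ e₂ ∈ E', e₁.image φ = e₂.image φ → e₁ = e₂ := by
    intro e₁ h₁ e₂ h₂ h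
    rw [← himginv e₁ h₁, h, himginv e₂ h₂]
  have hEcard : E.card = m := by
    rw [hE, Finset.card_image_of_injOn (fun a ha b hb h => hEinj a ha b hb h), hc]
  have hERG : isRGraph r N E := by
    intro f hf
    obtain ⟨e, he, rfl⟩ := Finset.mem_image.1 hf
    constructor
    · rw [Finset.card_image_of_injOn (Set.InjOn.mono (by exact_mod_cast hesub e he) hφinj)]
      exact (hE' e he).1
    · intro u hu
      obtain ⟨v, hv, rfl⟩ := Finset.mem_image.1 hu
      have := hφmem v (hesub e he hv)
      rw [Finset.mem_Icc] at this ⊢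
      omega
  have hEF : E ∈ (completeR r N).powersetCard m := by
    rw [Finset.mem_powersetCard]
    refine ⟨fun f hf => ?_, hEcard⟩
    rw [completeR, Finset.mem_powersetCard]
    exact ⟨(hERG f hf).2, (hERG f hf).1⟩
  refine ⟨E, hEF, ?_⟩
  refine lagr_le_lagr (by omega) (fun f hf => (hERG f hf).2) ?_
  intro x hx
  set S : Finset ℕ := V.image φ with hS
  have hSicc : S ⊆ Icc 1 (r * m) := by
    intro u hu
    obtain ⟨v, hv, rfl⟩ := Finset.mem_image.1 hu
    exact hφmem v hv
  have hNS : N ∉ S := fun h => by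
    have := Finset.mem_Icc.1 (hSicc h)
    omega
  have hxVle : ∑ v ∈ V, x v ≤ 1 := by
    rw [← hx.2.1]
    exact Finset.sum_le_sum_of_subset_of_nonneg hVsub fun v _ _ => hx.1 v
  set y : ℕ → ℝ := fun u =>
    (if u ∈ S then x (ψ u) else 0) + (if u = N then 1 - ∑ v ∈ V, x v else 0) with hy
  have hyv : ∀ v ∈ V, y (φ v) = x v := by
    intro v hv
    have h1 : φ v ∈ S := Finset.mem_image.2 ⟨v, hv, rfl⟩
    have h2 : φ v ≠ N := by
      have := Finset.mem_Icc.1 (hφmem v hv)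
      omega
    simp only [hy]
    rw [if_pos h1, if_neg h2, hψφ v hv, add_zero]
  have hysimp : simplexOn N y := by
    refine ⟨fun u => ?_, ?_, fun u hu => ?_⟩
    · simp only [hy]
      have h1 : (0:ℝ) ≤ if u ∈ S then x (ψ u) else 0 := by
        split
        · exact hx.1 _
        · exact le_rfl
      have h2 : (0:ℝ) ≤ if u = N then 1 - ∑ v ∈ V, x v else 0 := by
        split
        · linarith
        · exact le_refl 0
      exact add_nonneg h1 h2
    · simp only [hy]
      rw [Finset.sum_add_distrib, Finset.sum_ite_mem, Finset.sum_ite_eq']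
      have hSN : Icc 1 N ∩ S = S := Finset.inter_eq_right.2
        (hSicc.trans (Finset.Icc_subset_Icc_right (by omega)))
      rw [hSN, if_pos (Finset.mem_Icc.2 ⟨by omega, le_refl N⟩), hS,
        Finset.sum_image (fun a ha b hb h => hφinj ha hb h)]
      have : ∑ v ∈ V, x (ψ (φ v)) = ∑ v ∈ V, x v :=
        Finset.sum_congr rfl fun v hv => by rw [hψφ v hv]
      rw [this]
      ring
    · simp only [hy]
      have h1 : u ∉ S := fun h => hu (Finset.mem_Icc.2
        ⟨(Finset.mem_Icc.1 (hSicc h)).1, by have := (Finset.mem_Icc.1 (hSicc h)).2; omega⟩)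
      have h2 : u ≠ N := fun h => hu (by rw [h]; exact Finset.mem_Icc.2 ⟨by omega, le_rfl⟩)
      rw [if_neg h1, if_neg h2, add_zero]
  refine ⟨y, hysimp, le_of_eq ?_⟩
  rw [lagF, lagF, hE, Finset.sum_image (fun a ha b hb h => hEinj a ha b hb h)]
  refine Finset.sum_congr rfl fun e he => ?_
  rw [Finset.prod_image (fun a ha b hb h =>
    hφinj (hesub e he ha) (hesub e he hb) h)]
  exact Finset.prod_congr rfl fun v hv => (hyv v (hesub e he hv)).symm

theorem exists_leftCompressed_maximizer (r m : ℕ) (hr : 1 ≤ r) :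
    ∃ (n : ℕ) (E : Finset (Finset ℕ)), isRGraph r n E ∧ E.card = m ∧ leftCompressed E ∧
      ∀ (n' : ℕ) (E' : Finset (Finset ℕ)),
        isRGraph r n' E' → E'.card = m → lagr n' E' ≤ lagr n E := by
  classical
  rcases Nat.eq_zero_or_pos m with rfl | hm
  · refine ⟨1, ∅, fun e he => absurd he (Finset.notMem_empty e), Finset.card_empty,
      fun B hB => absurd hB (Finset.notMem_empty B), ?_⟩
    intro n' E' hE' hcard
    rw [Finset.card_eq_zero] at hcard
    subst hcard
    refine lagr_le_lagr le_rfl (fun e he => absurd he (Finset.notMem_empty e)) ?_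
    intro x hx
    exact ⟨basicWt, simplexOn_basicWt le_rfl,
      by rw [lagF, lagF, Finset.sum_empty, Finset.sum_empty]⟩
  · set N := r * m + 1 with hN
    set F := (completeR r N).powersetCard m with hF
    have hFne : F.Nonempty := Finset.powersetCard_nonempty.2 (completeR_card_ge r m hr hm)
    have hmemF : ∀ E ∈ F, isRGraph r N E ∧ E.card = m := by
      intro E hE
      rw [hF, Finset.mem_powersetCard] at hE
      refine ⟨fun e he => ?_, hE.2⟩
      have := hE.1 he
      rw [completeR, Finset.mem_powersetCard] at this
      exact ⟨this.2, this.1⟩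
    have hFof : ∀ E, isRGraph r N E → E.card = m → E ∈ F := by
      intro E h1 h2
      rw [hF, Finset.mem_powersetCard]
      refine ⟨fun e he => ?_, h2⟩
      rw [completeR, Finset.mem_powersetCard]
      exact ⟨(h1 e he).2, (h1 e he).1⟩
    obtain ⟨E₁, hE₁, hmax₁⟩ := Finset.exists_max_image F (lagr N) hFne
    set F' := F.filter (fun E => ∀ E'' ∈ F, lagr N E'' ≤ lagr N E) with hF'
    have hF'ne : F'.Nonempty := ⟨E₁, Finset.mem_filter.2 ⟨hE₁, hmax₁⟩⟩
    obtain ⟨E, hEF', hminwt⟩ := Finset.exists_min_image F' wt hF'ne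
    obtain ⟨hEF, hEmax⟩ := Finset.mem_filter.1 hEF'
    obtain ⟨hERG, hEcard⟩ := hmemF E hEF
    have hstab : ∀ i j, 1 ≤ i → i < j → j ≤ N → comp i j E = E := by
      intro i j h1 hij hjN
      by_contra hne
      have hiN : i ∈ Icc 1 N := Finset.mem_Icc.2 ⟨h1, by omega⟩
      have hjN' : j ∈ Icc 1 N := Finset.mem_Icc.2 ⟨by omega, hjN⟩
      have hCF : comp i j E ∈ F :=
        hFof _ (comp_isRGraph hiN hERG) (by rw [card_comp, hEcard])
      have hC' : comp i j E ∈ F' := Finset.mem_filter.2 ⟨hCF, fun E'' h'' =>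
        (hEmax E'' h'').trans (lagr_le_lagr_comp (Nat.ne_of_lt hij) hiN hjN' hERG)⟩
      exact absurd (hminwt _ hC') (not_le.2 (wt_comp_lt hij hne))
    have hLC : leftCompressed E := by
      refine leftCompressed_of_stable ?_
      intro i j e h1 hij he hje hie
      have hjN : j ≤ N := (Finset.mem_Icc.1 ((hERG e he).2 hje)).2
      exact stable_rep_mem (hstab i j h1 hij hjN) he hje hie
    refine ⟨N, E, hERG, hEcard, hLC, ?_⟩
    intro n' E' hE' hc'
    obtain ⟨E'', hE''F, hle⟩ := exists_good_relabel hr hE' hc'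
    rw [← hN] at hE''F hle
    rw [← hF] at hE''F
    exact hle.trans (hEmax E'' hE''F)
end

section
/- For positive integers $m$, $l$, $r$ satisfying $\binom{l-1}{r} \le m \le \binom{l-1}{r} + \binom{l-2}{r-1}$, the $r$-graph $C_{r,m}$ formed by the first $m$ elements of the colex ordering of $\mathbb{N}^{(r)}$ satisfies $\lambda(C_{r,m}) = \lambda([l-1]^{(r)})$. -/
open Finset

open Finset.Colex in
lemma aux_simplex_basic (n : ℕ) (hn : 1 ≤ n) : simplexOn n (fun i => if i = 1 then 1 else 0) := by
  refine ⟨fun i => by positivity, ?_, fun i hi => ?_⟩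
  · rw [Finset.sum_ite_eq' (Finset.Icc 1 n) 1 (fun _ => (1:ℝ))]
    simp [hn]
  · simp only [ite_eq_right_iff, one_ne_zero]
    rintro rfl; exact hi (by simp [hn])

lemma aux_x_le_one {n : ℕ} {x : ℕ → ℝ} (hx : simplexOn n x) (i : ℕ) : x i ≤ 1 := by
  by_cases hi : i ∈ Finset.Icc 1 n
  · calc x i ≤ ∑ j ∈ Finset.Icc 1 n, x j := Finset.single_le_sum (fun j _ => hx.1 j) hi
    _ = 1 := hx.2.1
  · rw [hx.2.2 i hi]; norm_num

lemma aux_lagF_le_card {n : ℕ} {E : Finset (Finset ℕ)} {x : ℕ → ℝ} (hx : simplexOn n x) :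
    lagF E x ≤ (E.card : ℝ) := by
  calc lagF E x ≤ ∑ _e ∈ E, (1:ℝ) :=
        Finset.sum_le_sum fun e _ =>
          Finset.prod_le_one (fun i _ => hx.1 i) (fun i _ => aux_x_le_one hx i)
    _ = E.card := by simp

lemma aux_bddAbove_lag (n : ℕ) (E : Finset (Finset ℕ)) :
    BddAbove {v : ℝ | ∃ x : ℕ → ℝ, simplexOn n x ∧ v = lagF E x} :=
  ⟨E.card, by rintro v ⟨x, hx, rfl⟩; exact aux_lagF_le_card hx⟩

lemma aux_nonempty_lag (n : ℕ) (hn : 1 ≤ n) (E : Finset (Finset ℕ)) :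
    Set.Nonempty {v : ℝ | ∃ x : ℕ → ℝ, simplexOn n x ∧ v = lagF E x} :=
  ⟨_, _, aux_simplex_basic n hn, rfl⟩

open Finset Finset.Colex in
theorem aux_struct (r l m : ℕ) (E : Finset (Finset ℕ))
    (hr : 1 ≤ r) (hl : r + 1 ≤ l)
    (hm1 : (l - 1).choose r ≤ m) (hm2 : m ≤ (l - 1).choose r + (l - 2).choose (r - 1))
    (hG : isRGraph r l E) (hcard : E.card = m)
    (hinit : ∀ A ∈ E, ∀ B : Finset ℕ, B.card = r → (∀ b ∈ B, 1 ≤ b) →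
      toColex B < toColex A → B ∈ E) :
    completeR r (l-1) ⊆ E ∧ ∀ e ∈ E, e ∉ completeR r (l-1) → l ∈ e ∧ (l-1) ∉ e := by
  have hl2 : 2 ≤ l := by omega
  set K := completeR r (l-1) with hKdef
  have hcardIcc : (Finset.Icc 1 (l-1)).card = l-1 := by rw [Nat.card_Icc]; omega
  have hcardK : K.card = (l-1).choose r := by
    rw [hKdef, completeR, Finset.card_powersetCard, hcardIcc]
  have hKE : K ⊆ E := by
    intro B hB
    by_contra hBE
    rw [hKdef, completeR, Finset.mem_powersetCard] at hB
    have hsub : E ⊆ K.erase B := by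
      intro A hA
      have hAB : toColex A ≤ toColex B := by
        by_contra h
        push_neg at h
        exact hBE (hinit A hA B hB.2 (fun b hb => (Finset.mem_Icc.mp (hB.1 hb)).1) h)
      refine Finset.mem_erase.mpr ⟨fun h => hBE (h ▸ hA), ?_⟩
      rw [hKdef, completeR, Finset.mem_powersetCard]
      refine ⟨fun a ha => Finset.mem_Icc.mpr ⟨(Finset.mem_Icc.mp ((hG A hA).2 ha)).1, ?_⟩,
        (hG A hA).1⟩
      exact Colex.forall_le_mono hAB (fun b hb => (Finset.mem_Icc.mp (hB.1 hb)).2) a ha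
    have hBK : B ∈ K := by
      rw [hKdef, completeR, Finset.mem_powersetCard]; exact hB
    have h1 : E.card ≤ K.card - 1 := by
      have := Finset.card_le_card hsub
      rwa [Finset.card_erase_of_mem hBK] at this
    have h2 : 1 ≤ K.card := Finset.card_pos.mpr ⟨B, hBK⟩
    omega
  refine ⟨hKE, fun e he heK => ?_⟩
  have hle : l ∈ e := by
    have : ¬ e ⊆ Finset.Icc 1 (l-1) := by
      intro h
      exact heK (by rw [hKdef, completeR, Finset.mem_powersetCard]; exact ⟨h, (hG e he).1⟩)
    obtain ⟨i, hie, hint⟩ := Finset.not_subset.mp this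
    have := Finset.mem_Icc.mp ((hG e he).2 hie)
    rw [Finset.mem_Icc] at hint
    have : i = l := by omega
    exact this ▸ hie
  refine ⟨hle, fun hl1e => ?_⟩
  set L := (completeR (r-1) (l-2)).image (insert l) with hLdef
  have hmemL : ∀ A ∈ completeR (r-1) (l-2), A ⊆ Finset.Icc 1 (l-2) ∧ A.card = r-1 ∧ l ∉ A
      ∧ (l-1) ∉ A := by
    intro A hA
    rw [completeR, Finset.mem_powersetCard] at hA
    refine ⟨hA.1, hA.2, fun h => ?_, fun h => ?_⟩
    · have := Finset.mem_Icc.mp (hA.1 h); omega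
    · have := Finset.mem_Icc.mp (hA.1 h); omega
  have hLE : L ⊆ E := by
    intro A' hA'
    rw [hLdef, Finset.mem_image] at hA'
    obtain ⟨A, hA, rfl⟩ := hA'
    obtain ⟨hAsub, hAcard, hlA, hl1A⟩ := hmemL A hA
    refine hinit e he _ ?_ ?_ ?_
    · rw [Finset.card_insert_of_notMem hlA, hAcard]; omega
    · intro b hb
      rcases Finset.mem_insert.mp hb with rfl | hbA
      · omega
      · exact (Finset.mem_Icc.mp (hAsub hbA)).1
    · refine Colex.toColex_lt_toColex_iff_exists_forall_lt.mpr ⟨l-1, hl1e, ?_, ?_⟩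
      · intro h
        rcases Finset.mem_insert.mp h with h | h
        · omega
        · exact hl1A h
      · intro b hb hbe
        rcases Finset.mem_insert.mp hb with rfl | hbA
        · exact absurd hle hbe
        · have := Finset.mem_Icc.mp (hAsub hbA); omega
  have hcardL : L.card = (l-2).choose (r-1) := by
    rw [hLdef, Finset.card_image_of_injOn, completeR, Finset.card_powersetCard, Nat.card_Icc]
    · simp
    · intro A hA B hB h
      rw [← Finset.erase_insert (hmemL A hA).2.2.1, h, Finset.erase_insert (hmemL B hB).2.2.1]
  have hdisj : Disjoint K L := by
    rw [Finset.disjoint_left]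
    intro A hA hAL
    rw [hKdef, completeR, Finset.mem_powersetCard] at hA
    rw [hLdef, Finset.mem_image] at hAL
    obtain ⟨B, hB, rfl⟩ := hAL
    have := Finset.mem_Icc.mp (hA.1 (Finset.mem_insert_self l B))
    omega
  have heKL : e ∉ K ∪ L := by
    intro h
    rcases Finset.mem_union.mp h with h | h
    · exact heK h
    · rw [hLdef, Finset.mem_image] at h
      obtain ⟨A, hA, h⟩ := h
      have : l - 1 ∈ insert l A := h ▸ hl1e
      rcases Finset.mem_insert.mp this with h' | h'
      · omega
      · exact (hmemL A hA).2.2.2 h'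
  have hSE : insert e (K ∪ L) ⊆ E := by
    intro A hA
    rcases Finset.mem_insert.mp hA with rfl | hA
    · exact he
    · rcases Finset.mem_union.mp hA with h | h
      · exact hKE h
      · exact hLE h
  have h1 := Finset.card_le_card hSE
  rw [Finset.card_insert_of_notMem heKL, Finset.card_union_of_disjoint hdisj,
    hcardK, hcardL, hcard] at h1
  omega

open Finset Finset.Colex in
theorem aux_analytic (r l : ℕ) (E : Finset (Finset ℕ)) (hr : 1 ≤ r) (hl : r + 1 ≤ l)
    (hG : isRGraph r l E) (hKE : completeR r (l-1) ⊆ E)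
    (hExtra : ∀ e ∈ E, e ∉ completeR r (l-1) → l ∈ e ∧ (l-1) ∉ e)
    (x : ℕ → ℝ) (hx : simplexOn l x) :
    ∃ y, simplexOn (l-1) y ∧ lagF E x ≤ lagF (completeR r (l-1)) y := by
  set K := completeR r (l-1) with hKdef
  have hl2 : 2 ≤ l := by omega
  have hll : l - 1 ≠ l := by omega
  set y : ℕ → ℝ := fun i => if i = l then 0 else if i = l-1 then x (l-1) + x l else x i with hy
  have hyi : ∀ i, i ≠ l → i ≠ l-1 → y i = x i := by intro i h1 h2; simp [hy, h1, h2]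
  have hyl1 : y (l-1) = x (l-1) + x l := by simp [hy, hll]
  have hsy : simplexOn (l-1) y := by
    refine ⟨?_, ?_, ?_⟩
    · intro i; simp only [hy]
      split_ifs
      exacts [le_refl 0, add_nonneg (hx.1 _) (hx.1 _), hx.1 i]
    · have e1 : ∀ i ∈ Finset.Icc 1 (l-1), y i = x i + (if i = l-1 then x l else 0) := by
        intro i hi; rw [Finset.mem_Icc] at hi
        have hil : i ≠ l := by omega
        by_cases h : i = l-1
        · subst h; rw [hyl1]; simp
        · rw [hyi i hil h]; simp [h]
      rw [Finset.sum_congr rfl e1, Finset.sum_add_distrib,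
        Finset.sum_ite_eq' (Finset.Icc 1 (l-1)) (l-1) (fun _ => x l)]
      have hmem : l-1 ∈ Finset.Icc 1 (l-1) := Finset.mem_Icc.mpr ⟨by omega, le_refl _⟩
      rw [if_pos hmem]
      have hIns : Finset.Icc 1 l = insert l (Finset.Icc 1 (l-1)) := by
        ext j; simp only [Finset.mem_Icc, Finset.mem_insert]; omega
      have e2 := hx.2.1
      rw [hIns, Finset.sum_insert (by rw [Finset.mem_Icc]; omega)] at e2
      linarith
    · intro i hi; rw [Finset.mem_Icc] at hi
      by_cases h1 : i = l
      · simp [hy, h1]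
      · have h2 : i ≠ l-1 := by omega
        rw [hyi i h1 h2]; exact hx.2.2 i (by rw [Finset.mem_Icc]; omega)
  refine ⟨y, hsy, ?_⟩
  set D := E \ K with hD
  set φ : Finset ℕ → Finset ℕ := fun e => insert (l-1) (e.erase l) with hφ
  have hDfacts : ∀ e ∈ D, l ∈ e ∧ (l-1) ∉ e ∧ e.erase l ⊆ Finset.Icc 1 (l-2)
      ∧ (e.erase l).card = r - 1 := by
    intro e he
    rw [hD, Finset.mem_sdiff] at he
    obtain ⟨hle, hl1e⟩ := hExtra e he.1 he.2
    refine ⟨hle, hl1e, ?_, ?_⟩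
    · intro i hi
      have h1 := Finset.mem_of_mem_erase hi
      have h2 := Finset.ne_of_mem_erase hi
      have h3 := Finset.mem_Icc.mp ((hG e he.1).2 h1)
      have h4 : i ≠ l - 1 := fun h => hl1e (h ▸ h1)
      rw [Finset.mem_Icc]; omega
    · rw [Finset.card_erase_of_mem hle, (hG e he.1).1]
  have hIK : ∀ e ∈ D, φ e ∈ K := by
    intro e he
    obtain ⟨hle, hl1e, hsub, hcard⟩ := hDfacts e he
    rw [hKdef, completeR, Finset.mem_powersetCard]
    constructor
    · intro i hi
      rcases Finset.mem_insert.mp hi with rfl | hi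
      · rw [Finset.mem_Icc]; omega
      · have := Finset.mem_Icc.mp (hsub hi); rw [Finset.mem_Icc]; omega
    · rw [hφ]
      have : l - 1 ∉ e.erase l := fun h => hl1e (Finset.mem_of_mem_erase h)
      rw [Finset.card_insert_of_notMem this, hcard]; omega
  have hinj : ∀ a ∈ D, ∀ b ∈ D, φ a = φ b → a = b := by
    intro a ha b hb h
    have hna : l - 1 ∉ a.erase l := fun h' => (hDfacts a ha).2.1 (Finset.mem_of_mem_erase h')
    have hnb : l - 1 ∉ b.erase l := fun h' => (hDfacts b hb).2.1 (Finset.mem_of_mem_erase h')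
    have : a.erase l = b.erase l := by
      rw [← Finset.erase_insert hna, ← Finset.erase_insert hnb]
      exact congrArg (fun s => s.erase (l-1)) h
    rw [← Finset.insert_erase (hDfacts a ha).1, this, Finset.insert_erase (hDfacts b hb).1]
  have hyx : ∀ e ∈ K, ∏ i ∈ e, x i ≤ ∏ i ∈ e, y i := by
    intro e heK
    rw [hKdef, completeR, Finset.mem_powersetCard] at heK
    refine Finset.prod_le_prod (fun i _ => hx.1 i) (fun i hi => ?_)
    have h1 := Finset.mem_Icc.mp (heK.1 hi)
    have hil : i ≠ l := by omega
    by_cases h : i = l-1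
    · subst h; rw [hyl1]; linarith [hx.1 l]
    · rw [hyi i hil h]
  have hkey : ∀ e ∈ D, ∏ i ∈ φ e, y i = ∏ i ∈ φ e, x i + ∏ i ∈ e, x i := by
    intro e he
    obtain ⟨hle, hl1e, hsub, -⟩ := hDfacts e he
    have hna : l - 1 ∉ e.erase l := fun h' => hl1e (Finset.mem_of_mem_erase h')
    have hprod : ∏ i ∈ e.erase l, y i = ∏ i ∈ e.erase l, x i := by
      refine Finset.prod_congr rfl (fun i hi => ?_)
      have := Finset.mem_Icc.mp (hsub hi)
      exact hyi i (by omega) (by omega)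
    rw [hφ]
    simp only
    rw [Finset.prod_insert hna, Finset.prod_insert hna, hprod, hyl1,
      ← Finset.mul_prod_erase e x hle]
    ring
  have hsdiff1 : ∑ e ∈ D, ∏ i ∈ e, x i + ∑ e ∈ K, ∏ i ∈ e, x i = lagF E x :=
    Finset.sum_sdiff hKE
  have hsub2 : D.image φ ⊆ K := by
    intro A hA; rw [Finset.mem_image] at hA; obtain ⟨e, he, rfl⟩ := hA; exact hIK e he
  have hsdiff2 : ∑ e ∈ K \ D.image φ, ∏ i ∈ e, y i + ∑ e ∈ D.image φ, ∏ i ∈ e, y i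
      = lagF K y := Finset.sum_sdiff hsub2
  have hsdiff3 : ∑ e ∈ K \ D.image φ, ∏ i ∈ e, x i + ∑ e ∈ D.image φ, ∏ i ∈ e, x i
      = ∑ e ∈ K, ∏ i ∈ e, x i := Finset.sum_sdiff hsub2
  have him1 : ∑ e ∈ D.image φ, ∏ i ∈ e, y i = ∑ e ∈ D, ∏ i ∈ φ e, y i :=
    Finset.sum_image hinj
  have him2 : ∑ e ∈ D.image φ, ∏ i ∈ e, x i = ∑ e ∈ D, ∏ i ∈ φ e, x i :=
    Finset.sum_image hinj
  have hsplit : ∑ e ∈ D, ∏ i ∈ φ e, y i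
      = ∑ e ∈ D, ∏ i ∈ φ e, x i + ∑ e ∈ D, ∏ i ∈ e, x i := by
    rw [← Finset.sum_add_distrib]
    exact Finset.sum_congr rfl hkey
  have hmono : ∑ e ∈ K \ D.image φ, ∏ i ∈ e, x i ≤ ∑ e ∈ K \ D.image φ, ∏ i ∈ e, y i :=
    Finset.sum_le_sum (fun e he => hyx e (Finset.mem_sdiff.mp he).1)
  linarith

theorem colex_initial_segment_lagrangian (r l m : ℕ) (E : Finset (Finset ℕ))
    (hr : 1 ≤ r) (hl : r + 1 ≤ l)
    (hm1 : (l - 1).choose r ≤ m) (hm2 : m ≤ (l - 1).choose r + (l - 2).choose (r - 1))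
    (hG : isRGraph r l E) (hcard : E.card = m)
    (hinit : ∀ A ∈ E, ∀ B : Finset ℕ, B.card = r → (∀ b ∈ B, 1 ≤ b) →
      toColex B < toColex A → B ∈ E) :
    lagr l E = lagr (l - 1) (completeR r (l - 1)) := by
  have hl2 : 2 ≤ l := by omega
  obtain ⟨hKE, hExtra⟩ := aux_struct r l m E hr hl hm1 hm2 hG hcard hinit
  apply le_antisymm
  · apply csSup_le (aux_nonempty_lag l (by omega) E)
    rintro v ⟨x, hx, rfl⟩
    obtain ⟨y, hy, hxy⟩ := aux_analytic r l E hr hl hG hKE hExtra x hx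
    exact hxy.trans (le_csSup (aux_bddAbove_lag (l-1) _) ⟨y, hy, rfl⟩)
  · apply csSup_le (aux_nonempty_lag (l-1) (by omega) _)
    rintro v ⟨x, hx, rfl⟩
    apply le_csSup (aux_bddAbove_lag l E)
    have hsub : Finset.Icc 1 (l-1) ⊆ Finset.Icc 1 l :=
      Finset.Icc_subset_Icc_right (by omega)
    refine ⟨x, ⟨hx.1, ?_, fun i hi => hx.2.2 i (fun h => hi (hsub h))⟩, ?_⟩
    · exact (Finset.sum_subset hsub (fun i _ hni => hx.2.2 i hni)).symm.trans hx.2.1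
    · unfold lagF
      exact (Finset.sum_subset hKE (fun e heE heK =>
        Finset.prod_eq_zero (hExtra e heE heK).1
          (hx.2.2 l (by rw [Finset.mem_Icc]; omega))))
end

section
/- Let $r \ge 3$ and $m = \binom{l-1}{r} + \binom{l-2}{r-1} + 1$. Let $C_{r,m}$ be the $r$-graph on vertex set $[l]$ with edge set $[l-1]^{(r)} \cup \{i_1 \cdots i_{r-1} l : i_1 \cdots i_{r-1} \in [l-2]^{(r-1)}\} \cup \{1 \cdots (r-2)(l-1)l\}$. Then $\lambda(C_{r,m}) > \lambda([l-1]^{(r)})$; in particular, the weighting $x_1 = \cdots = x_{l-2} = \frac{1}{l-1}$, $x_{l-1} = x_l = \frac{1}{2(l-1)}$ witnesses $\lambda(C_{r,m}, \vec{x}) > \lambda([l-1]^{(r)})$. -/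
open Finset

lemma key_ineq (k : ℕ) (u : ℝ) (hu : 0 ≤ u) :
    u ^ k * (((k : ℝ) + 1) - (k : ℝ) * u) ≤ 1 := by
  induction k with
  | zero => norm_num
  | succ k ih =>
      have h2 : u * (((k : ℝ) + 2) - ((k : ℝ) + 1) * u) ≤ ((k : ℝ) + 1) - (k : ℝ) * u := by
        nlinarith [sq_nonneg (u - 1)]
      have h3 : u ^ (k + 1) * (((k : ℝ) + 2) - ((k : ℝ) + 1) * u)
          ≤ u ^ k * (((k : ℝ) + 1) - (k : ℝ) * u) := by
        calc u ^ (k + 1) * (((k : ℝ) + 2) - ((k : ℝ) + 1) * u)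
            = u ^ k * (u * (((k : ℝ) + 2) - ((k : ℝ) + 1) * u)) := by ring
          _ ≤ u ^ k * (((k : ℝ) + 1) - (k : ℝ) * u) :=
              mul_le_mul_of_nonneg_left h2 (pow_nonneg hu k)
      have := h3.trans ih
      push_cast
      convert this using 2
      · rfl
      · ring

lemma step_core (m k : ℕ) (hk : k ≤ m) (s1 u : ℝ) (hs1 : 0 ≤ s1) (hu : 0 ≤ u) :
    ((m : ℝ) + 1) ^ (k + 1) *
        ((m.choose (k + 1) : ℝ) * s1 ^ (k + 1) + u * m * (m.choose k : ℝ) * s1 ^ k)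
      ≤ ((m + 1).choose (k + 1) : ℝ) * (m : ℝ) ^ (k + 1) * (s1 + u) ^ (k + 1) := by
  rcases Nat.eq_zero_or_pos m with hm | hm
  · subst hm
    interval_cases k
    norm_num
  have hmR : (0 : ℝ) < m := by exact_mod_cast hm
  set S : ℝ := s1 + u with hS
  have hSnn : 0 ≤ S := by positivity
  rcases eq_or_lt_of_le hSnn with hS0 | hSpos
  · have hs10 : s1 = 0 := by nlinarith
    have hu0 : u = 0 := by nlinarith
    simp only [hS, hs10, hu0]
    norm_num
  -- identities
  have idA : ((k : ℝ) + 1) * (m.choose (k + 1) : ℝ) = ((m : ℝ) - k) * (m.choose k : ℝ) := by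
    have h' := Nat.choose_succ_right_eq m k
    have hcast : ((m.choose (k+1) * (k+1) : ℕ) : ℝ) = ((m.choose k * (m - k) : ℕ) : ℝ) := by
      rw [h']
    push_cast [Nat.cast_sub hk] at hcast
    linarith
  have idB : ((k : ℝ) + 1) * (((m + 1).choose (k + 1) : ℕ) : ℝ)
      = ((m : ℝ) + 1) * (m.choose k : ℝ) := by
    have h'' := Nat.add_one_mul_choose_eq m k
    have hcast : ((m.succ * m.choose k : ℕ) : ℝ) = ((m.succ.choose k.succ * k.succ : ℕ) : ℝ) := by
      rw [h'']
    push_cast [Nat.succ_eq_add_one] at hcast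
    linarith
  -- the key single-variable bound
  have hT : (0 : ℝ) < (m : ℝ) * S := by positivity
  set u' : ℝ := s1 * ((m : ℝ) + 1) / ((m : ℝ) * S) with hu'
  have hu'nn : 0 ≤ u' := by positivity
  have key := key_ineq k u' hu'nn
  have hP : (0 : ℝ) < ((m : ℝ) * S) ^ k := by positivity
  have hQ : (0 : ℝ) < ((m : ℝ) + 1) ^ k := by positivity
  have h3 : s1 ^ k * (((k : ℝ) + 1) * ((m : ℝ) * S) - (k : ℝ) * (((m : ℝ) + 1) * s1))
      ≤ (m : ℝ) ^ (k + 1) * S ^ (k + 1) / ((m : ℝ) + 1) ^ k := by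
    have hmul := mul_le_mul_of_nonneg_right key (le_of_lt (by positivity :
      (0:ℝ) < ((m : ℝ) * S) ^ k * ((m : ℝ) * S) / ((m : ℝ) + 1) ^ k))
    have heq : u' ^ k * (((k : ℝ) + 1) - (k : ℝ) * u') *
          (((m : ℝ) * S) ^ k * ((m : ℝ) * S) / ((m : ℝ) + 1) ^ k)
        = s1 ^ k * (((k : ℝ) + 1) * ((m : ℝ) * S) - (k : ℝ) * (((m : ℝ) + 1) * s1)) := by
      rw [hu', div_pow, mul_pow]
      field_simp
    have heq2 : (1 : ℝ) * (((m : ℝ) * S) ^ k * ((m : ℝ) * S) / ((m : ℝ) + 1) ^ k)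
        = (m : ℝ) ^ (k + 1) * S ^ (k + 1) / ((m : ℝ) + 1) ^ k := by
      rw [mul_pow]; ring
    rw [heq, heq2] at hmul
    exact hmul
  -- conclude by multiplying by (k+1)
  have hk1 : (0 : ℝ) < (k : ℝ) + 1 := by positivity
  rw [← mul_le_mul_iff_right₀ hk1]
  calc ((k : ℝ) + 1) * (((m : ℝ) + 1) ^ (k + 1) *
        ((m.choose (k + 1) : ℝ) * s1 ^ (k + 1) + u * m * (m.choose k : ℝ) * s1 ^ k))
      = ((m : ℝ) + 1) ^ (k + 1) * ((((k : ℝ) + 1) * (m.choose (k + 1) : ℝ)) * s1 ^ (k + 1)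
          + ((k : ℝ) + 1) * u * (m : ℝ) * (m.choose k : ℝ) * s1 ^ k) := by ring
    _ = ((m : ℝ) + 1) ^ (k + 1) * ((m.choose k : ℝ) *
          (s1 ^ k * (((k : ℝ) + 1) * ((m : ℝ) * S) - (k : ℝ) * (((m : ℝ) + 1) * s1)))) := by
        rw [idA]; rw [hS]; ring
    _ ≤ ((m : ℝ) + 1) ^ (k + 1) * ((m.choose k : ℝ) *
          ((m : ℝ) ^ (k + 1) * S ^ (k + 1) / ((m : ℝ) + 1) ^ k)) := by
        apply mul_le_mul_of_nonneg_left _ (by positivity)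
        exact mul_le_mul_of_nonneg_left h3 (by positivity)
    _ = (((k : ℝ) + 1) * (((m + 1).choose (k + 1) : ℕ) : ℝ)) * ((m : ℝ) ^ (k + 1) * S ^ (k + 1))
          * (((m : ℝ) + 1) ^ (k + 1) / (((m : ℝ) + 1) ^ k * ((m : ℝ) + 1))) := by
        rw [idB]; field_simp
    _ = ((k : ℝ) + 1) * (((m + 1).choose (k + 1) : ℝ) * (m : ℝ) ^ (k + 1) * S ^ (k + 1)) := by
        rw [pow_succ]
        field_simp
        ring



lemma step (m k : ℕ) (hk : k ≤ m) (hm : 1 ≤ m) (s1 u e1 e2 : ℝ) (hs1 : 0 ≤ s1) (hu : 0 ≤ u)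
    (h1 : (m : ℝ) ^ (k + 1) * e1 ≤ (m.choose (k + 1) : ℝ) * s1 ^ (k + 1))
    (h2 : (m : ℝ) ^ k * e2 ≤ (m.choose k : ℝ) * s1 ^ k) :
    ((m : ℝ) + 1) ^ (k + 1) * (e1 + u * e2)
      ≤ ((m + 1).choose (k + 1) : ℝ) * (s1 + u) ^ (k + 1) := by
  have hmR : (0 : ℝ) < m := by exact_mod_cast hm
  have hmp : (0 : ℝ) < (m : ℝ) ^ (k + 1) := by positivity
  rw [← mul_le_mul_iff_left₀ hmp]
  calc ((m : ℝ) + 1) ^ (k + 1) * (e1 + u * e2) * (m : ℝ) ^ (k + 1)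
      = ((m : ℝ) + 1) ^ (k + 1) * ((m : ℝ) ^ (k + 1) * e1 + (u * m) * ((m : ℝ) ^ k * e2)) := by
        ring
    _ ≤ ((m : ℝ) + 1) ^ (k + 1) *
          ((m.choose (k + 1) : ℝ) * s1 ^ (k + 1) + (u * m) * ((m.choose k : ℝ) * s1 ^ k)) := by
        apply mul_le_mul_of_nonneg_left _ (by positivity)
        exact add_le_add h1 (mul_le_mul_of_nonneg_left h2 (by positivity))
    _ = ((m : ℝ) + 1) ^ (k + 1) *
          ((m.choose (k + 1) : ℝ) * s1 ^ (k + 1) + u * m * (m.choose k : ℝ) * s1 ^ k) := by ring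
    _ ≤ ((m + 1).choose (k + 1) : ℝ) * (m : ℝ) ^ (k + 1) * (s1 + u) ^ (k + 1) :=
        step_core m k hk s1 u hs1 hu
    _ = ((m + 1).choose (k + 1) : ℝ) * (s1 + u) ^ (k + 1) * (m : ℝ) ^ (k + 1) := by ring

lemma maclaurin (A : Finset ℕ) (r : ℕ) (x : ℕ → ℝ) (hx : ∀ i, 0 ≤ x i) :
    (A.card : ℝ) ^ r * ∑ e ∈ A.powersetCard r, ∏ i ∈ e, x i
      ≤ (A.card.choose r : ℝ) * (∑ i ∈ A, x i) ^ r := by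
  induction A using Finset.induction_on generalizing r with
  | empty => cases r <;> simp
  | @insert a s ha ih =>
      cases r with
      | zero => simp
      | succ k =>
          rw [Finset.powersetCard_succ_insert ha]
          have hdisj : Disjoint (s.powersetCard (k + 1)) ((s.powersetCard k).image (insert a)) := by
            rw [Finset.disjoint_left]
            intro e he hei
            have hes : e ⊆ s := (Finset.mem_powersetCard.mp he).1
            obtain ⟨e', he', rfl⟩ := Finset.mem_image.mp hei
            exact ha (hes (Finset.mem_insert_self a e'))
          rw [Finset.sum_union hdisj]
          have himg : ∑ e ∈ (s.powersetCard k).image (insert a), ∏ i ∈ e, x i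
              = x a * ∑ e ∈ s.powersetCard k, ∏ i ∈ e, x i := by
            rw [Finset.sum_image, Finset.mul_sum]
            · apply Finset.sum_congr rfl
              intro e he
              have hae : a ∉ e := fun h => ha ((Finset.mem_powersetCard.mp he).1 h)
              rw [Finset.prod_insert hae]
            · intro e he e' he' heq
              have hae : a ∉ e := fun h => ha ((Finset.mem_powersetCard.mp he).1 h)
              have hae' : a ∉ e' := fun h => ha ((Finset.mem_powersetCard.mp he').1 h)
              rw [← Finset.erase_insert hae, ← Finset.erase_insert hae', heq]
          rw [himg, Finset.card_insert_of_notMem ha, Finset.sum_insert ha]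
          rcases Nat.lt_or_ge s.card k with hlt | hge
          · rw [Finset.powersetCard_eq_empty.mpr hlt,
              Finset.powersetCard_eq_empty.mpr (by omega : s.card < k + 1)]
            simp only [Finset.sum_empty, mul_zero, add_zero, zero_add]
            have : (0:ℝ) ≤ (((s.card + 1).choose (k + 1) : ℕ) : ℝ) * (x a + ∑ i ∈ s, x i) ^ (k+1) := by
              have h1 : 0 ≤ x a + ∑ i ∈ s, x i := by
                have := hx a
                have : (0:ℝ) ≤ ∑ i ∈ s, x i := Finset.sum_nonneg fun i _ => hx i
                positivity
              positivity
            exact this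
          · rcases Nat.eq_zero_or_pos s.card with hc0 | hc1
            · -- s empty, k = 0
              have hs : s = ∅ := Finset.card_eq_zero.mp hc0
              have hk0 : k = 0 := by omega
              subst hs hk0
              rw [show powersetCard 1 (∅ : Finset ℕ) = ∅ from
                Finset.powersetCard_eq_empty.mpr (by simp)]
              simp
            · have hsum : 0 ≤ ∑ i ∈ s, x i := Finset.sum_nonneg fun i _ => hx i
              have := step s.card k hge hc1 (∑ i ∈ s, x i) (x a)
                (∑ e ∈ s.powersetCard (k + 1), ∏ i ∈ e, x i)
                (∑ e ∈ s.powersetCard k, ∏ i ∈ e, x i) hsum (hx a) (ih (k + 1)) (ih k)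
              push_cast
              push_cast at this
              calc ((s.card : ℝ) + 1) ^ (k + 1) *
                    ((∑ e ∈ s.powersetCard (k + 1), ∏ i ∈ e, x i)
                      + x a * ∑ e ∈ s.powersetCard k, ∏ i ∈ e, x i)
                  ≤ (((s.card + 1).choose (k + 1) : ℕ) : ℝ) * ((∑ i ∈ s, x i) + x a) ^ (k + 1) :=
                    this
                _ = (((s.card + 1).choose (k + 1) : ℕ) : ℝ) * (x a + ∑ i ∈ s, x i) ^ (k + 1) := by
                    ring


lemma sum_image_insert (a : ℕ) (A : Finset ℕ) (ha : a ∉ A) (x : ℕ → ℝ) (m : ℕ) :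
    ∑ e ∈ (A.powersetCard m).image (insert a), ∏ i ∈ e, x i
      = x a * ∑ e ∈ A.powersetCard m, ∏ i ∈ e, x i := by
  rw [Finset.sum_image, Finset.mul_sum]
  · apply Finset.sum_congr rfl
    intro e he
    have hae : a ∉ e := fun h => ha ((Finset.mem_powersetCard.mp he).1 h)
    rw [Finset.prod_insert hae]
  · intro e he e' he' heq
    have hae : a ∉ e := fun h => ha ((Finset.mem_powersetCard.mp he).1 h)
    have hae' : a ∉ e' := fun h => ha ((Finset.mem_powersetCard.mp he').1 h)
    rw [← Finset.erase_insert hae, ← Finset.erase_insert hae', heq]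

lemma complete_split (a : ℕ) (A : Finset ℕ) (ha : a ∉ A) (m : ℕ) (x : ℕ → ℝ) :
    ∑ e ∈ (insert a A).powersetCard (m + 1), ∏ i ∈ e, x i
      = ∑ e ∈ A.powersetCard (m + 1), ∏ i ∈ e, x i
        + x a * ∑ e ∈ A.powersetCard m, ∏ i ∈ e, x i := by
  rw [Finset.powersetCard_succ_insert ha]
  have hdisj : Disjoint (A.powersetCard (m + 1)) ((A.powersetCard m).image (insert a)) := by
    rw [Finset.disjoint_left]
    intro e he hei
    have hes : e ⊆ A := (Finset.mem_powersetCard.mp he).1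
    obtain ⟨e', he', rfl⟩ := Finset.mem_image.mp hei
    exact ha (hes (Finset.mem_insert_self a e'))
  rw [Finset.sum_union hdisj, sum_image_insert a A ha x m]

lemma sum_powersetCard_const (A : Finset ℕ) (x : ℕ → ℝ) (c : ℝ) (m : ℕ)
    (h : ∀ i ∈ A, x i = c) :
    ∑ e ∈ A.powersetCard m, ∏ i ∈ e, x i = (A.card.choose m : ℝ) * c ^ m := by
  have : ∀ e ∈ A.powersetCard m, ∏ i ∈ e, x i = c ^ m := by
    intro e he
    obtain ⟨hsub, hcard⟩ := Finset.mem_powersetCard.mp he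
    rw [← hcard, ← Finset.prod_const]
    exact Finset.prod_congr rfl fun i hi => h i (hsub hi)
  rw [Finset.sum_congr rfl this, Finset.sum_const, Finset.card_powersetCard, nsmul_eq_mul]

lemma lag_le_card (n : ℕ) (E : Finset (Finset ℕ)) (y : ℕ → ℝ)
    (h0 : ∀ i, 0 ≤ y i) (h1 : ∑ i ∈ Finset.Icc 1 n, y i = 1)
    (h2 : ∀ i, i ∉ Finset.Icc 1 n → y i = 0) :
    ∑ e ∈ E, ∏ i ∈ e, y i ≤ (E.card : ℝ) := by
  have hy1 : ∀ i, y i ≤ 1 := by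
    intro i
    by_cases hi : i ∈ Finset.Icc 1 n
    · calc y i ≤ ∑ j ∈ Finset.Icc 1 n, y j := Finset.single_le_sum (fun j _ => h0 j) hi
        _ = 1 := h1
    · rw [h2 i hi]; norm_num
  calc ∑ e ∈ E, ∏ i ∈ e, y i
      ≤ ∑ e ∈ E, (1 : ℝ) :=
        Finset.sum_le_sum fun e _ => Finset.prod_le_one (fun i _ => h0 i) fun i _ => hy1 i
    _ = (E.card : ℝ) := by simp

theorem colex_exceeds_clique_lagrangian (r l : ℕ) (hr : 3 ≤ r) (hl : r + 2 ≤ l) :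
    let E : Finset (Finset ℕ) :=
      completeR r (l - 1) ∪
        ((Finset.Icc 1 (l - 2)).powersetCard (r - 1)).image (insert l) ∪
        {insert (l - 1) (insert l (Finset.Icc 1 (r - 2)))}
    let x : ℕ → ℝ := fun i =>
      if 1 ≤ i ∧ i ≤ l - 2 then 1 / ((l : ℝ) - 1)
      else if i = l - 1 ∨ i = l then 1 / (2 * ((l : ℝ) - 1)) else 0
    lagr (l - 1) (completeR r (l - 1)) < lagF E x ∧
      lagF E x ≤ lagr l E ∧
      lagr (l - 1) (completeR r (l - 1)) < lagr l E := by
  intro E x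
  have hl5 : 5 ≤ l := by omega
  have hlR : (5 : ℝ) ≤ (l : ℝ) := by exact_mod_cast hl5
  have hL : (0 : ℝ) < (l : ℝ) - 1 := by linarith
  have hx_at : ∀ i, x i = if 1 ≤ i ∧ i ≤ l - 2 then 1 / ((l : ℝ) - 1)
      else if i = l - 1 ∨ i = l then 1 / (2 * ((l : ℝ) - 1)) else 0 := fun i => rfl
  have hEeq : E = completeR r (l - 1) ∪
      ((Finset.Icc 1 (l - 2)).powersetCard (r - 1)).image (insert l) ∪
      {insert (l - 1) (insert l (Finset.Icc 1 (r - 2)))} := rfl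
  obtain ⟨t, ht⟩ : ∃ t : ℝ, t = 1 / ((l : ℝ) - 1) := ⟨_, rfl⟩
  obtain ⟨hh, hhh⟩ : ∃ hh : ℝ, hh = 1 / (2 * ((l : ℝ) - 1)) := ⟨_, rfl⟩
  have htpos : 0 < t := by rw [ht]; positivity
  have hht : hh = t / 2 := by rw [hhh, ht]; field_simp
  -- basic memberships / facts
  have hcast1 : ((l - 1 : ℕ) : ℝ) = (l : ℝ) - 1 := by
    rw [Nat.cast_sub (by omega)]; norm_num
  have hcast2 : ((l - 2 : ℕ) : ℝ) = (l : ℝ) - 2 := by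
    rw [Nat.cast_sub (by omega)]; norm_num
  have hIcc1 : Finset.Icc 1 (l - 1) = insert (l - 1) (Finset.Icc 1 (l - 2)) := by
    ext i; simp only [Finset.mem_Icc, Finset.mem_insert]; omega
  have hm1 : l - 1 ∉ Finset.Icc 1 (l - 2) := by simp only [Finset.mem_Icc]; omega
  have hm2 : l ∉ Finset.Icc 1 (l - 2) := by simp only [Finset.mem_Icc]; omega
  have hcardIcc : (Finset.Icc 1 (l - 2)).card = l - 2 := by
    rw [Nat.card_Icc]; omega
  have hr1' : r - 1 + 1 = r := by omega
  have hr2' : r - 2 + 1 = r - 1 := by omega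
  -- values of x
  have hxt : ∀ i ∈ Finset.Icc 1 (l - 2), x i = t := by
    intro i hi
    obtain ⟨h1i, h2i⟩ := Finset.mem_Icc.mp hi
    rw [hx_at, if_pos ⟨h1i, h2i⟩, ht]
  have hxl1 : x (l - 1) = hh := by
    rw [hx_at, if_neg (by omega), if_pos (Or.inl rfl), hhh]
  have hxl2 : x l = hh := by
    rw [hx_at, if_neg (by omega), if_pos (Or.inr rfl), hhh]
  have hx0 : ∀ i, 0 ≤ x i := by
    intro i
    rw [hx_at]
    split_ifs
    · positivity
    · positivity
    · exact le_refl 0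
  -- simplexOn l x
  have hIccl : Finset.Icc 1 l = insert (l - 1) (insert l (Finset.Icc 1 (l - 2))) := by
    ext i; simp only [Finset.mem_Icc, Finset.mem_insert]; omega
  have hm3 : l - 1 ∉ insert l (Finset.Icc 1 (l - 2)) := by
    simp only [Finset.mem_insert, Finset.mem_Icc]; omega
  have hsum_main : ∑ i ∈ Finset.Icc 1 (l - 2), x i = ((l : ℝ) - 2) * t := by
    rw [Finset.sum_congr rfl hxt, Finset.sum_const, hcardIcc, nsmul_eq_mul, hcast2]
  have hx_simplex : simplexOn l x := by
    refine ⟨hx0, ?_, ?_⟩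
    · rw [hIccl, Finset.sum_insert hm3, Finset.sum_insert hm2, hxl1, hxl2, hsum_main,
        hht, ht]
      field_simp
      ring
    · intro i hi
      simp only [Finset.mem_Icc, not_and, not_le] at hi
      rw [hx_at, if_neg (by omega), if_neg (by omega)]
  -- value of lagF E x
  have hsum_pc : ∀ m : ℕ, ∑ e ∈ (Finset.Icc 1 (l - 2)).powersetCard m, ∏ i ∈ e, x i
      = (((l - 2).choose m : ℕ) : ℝ) * t ^ m := by
    intro m
    rw [sum_powersetCard_const _ x t m hxt, hcardIcc]
  have hA_val : ∑ e ∈ completeR r (l - 1), ∏ i ∈ e, x i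
      = (((l - 2).choose r : ℕ) : ℝ) * t ^ r
        + hh * ((((l - 2).choose (r - 1) : ℕ) : ℝ) * t ^ (r - 1)) := by
    have hs := complete_split (l - 1) (Finset.Icc 1 (l - 2)) hm1 (r - 1) x
    rw [hr1'] at hs
    rw [completeR, hIcc1, hs, hsum_pc r, hsum_pc (r - 1), hxl1]
  have hB_val : ∑ e ∈ ((Finset.Icc 1 (l - 2)).powersetCard (r - 1)).image (insert l), ∏ i ∈ e, x i
      = hh * ((((l - 2).choose (r - 1) : ℕ) : ℝ) * t ^ (r - 1)) := by
    rw [sum_image_insert l _ hm2 x (r - 1), hsum_pc (r - 1), hxl2]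
  have hmr2 : l ∉ Finset.Icc 1 (r - 2) := by simp only [Finset.mem_Icc]; omega
  have hmr1 : l - 1 ∉ insert l (Finset.Icc 1 (r - 2)) := by
    simp only [Finset.mem_insert, Finset.mem_Icc]; omega
  have hC_val : ∏ i ∈ insert (l - 1) (insert l (Finset.Icc 1 (r - 2))), x i
      = hh * (hh * t ^ (r - 2)) := by
    have hsub : ∀ i ∈ Finset.Icc 1 (r - 2), x i = t := by
      intro i hi
      obtain ⟨h1i, h2i⟩ := Finset.mem_Icc.mp hi
      exact hxt i (Finset.mem_Icc.mpr ⟨h1i, by omega⟩)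
    have hprod2 : ∏ i ∈ Finset.Icc 1 (r - 2), x i = t ^ (r - 2) := by
      rw [Finset.prod_congr rfl hsub, Finset.prod_const, Nat.card_Icc,
        show r - 2 + 1 - 1 = r - 2 from by omega]
    rw [Finset.prod_insert hmr1, Finset.prod_insert hmr2, hxl1, hxl2, hprod2]
  -- disjointness of the three pieces
  have hnotmemA : ∀ e ∈ completeR r (l - 1), l ∉ e := by
    intro e he hle
    have := (Finset.mem_powersetCard.mp he).1 hle
    simp only [Finset.mem_Icc] at this
    omega
  have hd1 : Disjoint (completeR r (l - 1))
      (((Finset.Icc 1 (l - 2)).powersetCard (r - 1)).image (insert l)) := by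
    rw [Finset.disjoint_left]
    intro e he hei
    obtain ⟨e', _, rfl⟩ := Finset.mem_image.mp hei
    exact hnotmemA _ he (Finset.mem_insert_self l e')
  have hd2 : Disjoint (completeR r (l - 1) ∪
        ((Finset.Icc 1 (l - 2)).powersetCard (r - 1)).image (insert l))
      ({insert (l - 1) (insert l (Finset.Icc 1 (r - 2)))} : Finset (Finset ℕ)) := by
    rw [Finset.disjoint_right]
    intro e he hei
    rw [Finset.mem_singleton] at he
    subst he
    rcases Finset.mem_union.mp hei with h | h
    · exact hnotmemA _ h (Finset.mem_insert_of_mem (Finset.mem_insert_self l _))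
    · obtain ⟨e', he', heq⟩ := Finset.mem_image.mp h
      have hl1mem : l - 1 ∈ insert l e' := by
        rw [heq]; exact Finset.mem_insert_self _ _
      rcases Finset.mem_insert.mp hl1mem with h' | h'
      · omega
      · have := (Finset.mem_powersetCard.mp he').1 h'
        simp only [Finset.mem_Icc] at this
        omega
  have hval : lagF E x
      = (((l - 2).choose r : ℕ) : ℝ) * t ^ r
        + 2 * (hh * ((((l - 2).choose (r - 1) : ℕ) : ℝ) * t ^ (r - 1)))
        + hh * (hh * t ^ (r - 2)) := by
    rw [lagF, hEeq, Finset.sum_union hd2, Finset.sum_union hd1, Finset.sum_singleton,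
      hA_val, hB_val, hC_val]
    ring
  -- rewrite hval in closed form
  have hPascal : (((l - 1).choose r : ℕ) : ℝ)
      = (((l - 2).choose r : ℕ) : ℝ) + (((l - 2).choose (r - 1) : ℕ) : ℝ) := by
    have : (l - 1).choose r = (l - 2).choose (r - 1) + (l - 2).choose r := by
      rw [show l - 1 = (l - 2) + 1 from by omega, show r = (r - 1) + 1 from by omega,
        Nat.choose_succ_succ, Nat.succ_eq_add_one, hr1']
    rw [this]
    push_cast
    ring
  have htr1 : t ^ (r - 1) * t = t ^ r := by rw [← pow_succ, hr1']
  have htr2 : t ^ (r - 2) * t = t ^ (r - 1) := by rw [← pow_succ, hr2']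
  have htrpos : 0 < t ^ r := pow_pos htpos r
  have hval2 : lagF E x = (((l - 1).choose r : ℕ) : ℝ) * t ^ r + t ^ r / 4 := by
    rw [hval, hPascal, hht, ← htr1, ← htr2]
    ring
  -- upper bound for the complete graph Lagrangian
  have hub : ∀ v ∈ {v : ℝ | ∃ y : ℕ → ℝ, simplexOn (l - 1) y ∧ v = lagF (completeR r (l - 1)) y},
      v ≤ (((l - 1).choose r : ℕ) : ℝ) * t ^ r := by
    rintro v ⟨y, ⟨hy0, hy1, _⟩, rfl⟩
    have hmac := maclaurin (Finset.Icc 1 (l - 1)) r y hy0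
    have hcardIcc1 : (Finset.Icc 1 (l - 1)).card = l - 1 := by rw [Nat.card_Icc]; omega
    rw [hcardIcc1, hy1, one_pow, mul_one, hcast1] at hmac
    have hLr : (0 : ℝ) < ((l : ℝ) - 1) ^ r := pow_pos hL r
    have htr : t ^ r * ((l : ℝ) - 1) ^ r = 1 := by
      rw [ht, div_pow, one_pow]
      field_simp
    rw [← mul_le_mul_iff_left₀ hLr]
    calc lagF (completeR r (l - 1)) y * ((l : ℝ) - 1) ^ r
        = ((l : ℝ) - 1) ^ r * ∑ e ∈ (Finset.Icc 1 (l - 1)).powersetCard r, ∏ i ∈ e, y i := by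
          rw [lagF, completeR]; ring
      _ ≤ (((l - 1).choose r : ℕ) : ℝ) := hmac
      _ = (((l - 1).choose r : ℕ) : ℝ) * t ^ r * ((l : ℝ) - 1) ^ r := by
          rw [mul_assoc, htr, mul_one]
  have hsup_le : lagr (l - 1) (completeR r (l - 1)) ≤ (((l - 1).choose r : ℕ) : ℝ) * t ^ r :=
    Real.sSup_le hub (by positivity)
  have hpart1 : lagr (l - 1) (completeR r (l - 1)) < lagF E x := by
    rw [hval2]
    have : (((l - 1).choose r : ℕ) : ℝ) * t ^ r
        < (((l - 1).choose r : ℕ) : ℝ) * t ^ r + t ^ r / 4 := by linarith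
    exact lt_of_le_of_lt hsup_le this
  have hbdd : BddAbove {v : ℝ | ∃ y : ℕ → ℝ, simplexOn l y ∧ v = lagF E y} := by
    refine ⟨(E.card : ℝ), ?_⟩
    rintro v ⟨y, ⟨hy0, hy1, hy2⟩, rfl⟩
    exact lag_le_card l E y hy0 hy1 hy2
  have hpart2 : lagF E x ≤ lagr l E :=
    le_csSup hbdd ⟨x, hx_simplex, rfl⟩
  exact ⟨hpart1, hpart2, lt_of_lt_of_le hpart1 hpart2⟩
end

section
/- Let $G$ be a left-compressed 3-graph on vertex set $[l]$ with $m$ edges where $\binom{l-1}{3} \le m \le \binom{l-1}{3} + \binom{l-2}{2}$, containing a clique of order $l-1$. If $|E_{(l-1)l}| > |[l-2]^{(2)} \setminus E_l|$, then $m > \binom{l-1}{3} + \binom{l-2}{2}$, a contradiction; hence $|E_{(l-1)l}| \le |[l-2]^{(2)} \setminus E_l|$, i.e., there exists an injection from $E_{(l-1)l}$ into $[l-2]^{(2)} \setminus E_l$. -/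
open Finset

lemma sort_triple_aux {a b c : ℕ} (h1 : a < b) (h2 : b < c) :
    Finset.sort ({a,b,c} : Finset ℕ) (·≤·) = [a,b,c] := by
  refine (fun p h => List.Perm.eq_of_pairwise' (Finset.pairwise_sort _ _) h p) ?_ ?_
  · apply List.perm_of_nodup_nodup_toFinset_eq (Finset.sort_nodup _ _)
    · simp [List.nodup_cons]; omega
    · simp [Finset.sort_toFinset]
  · simp [List.pairwise_cons]; omega

theorem pairlink_card_le (l m : ℕ) (E : Finset (Finset ℕ))
    (hG : isRGraph 3 l E) (hlc : leftCompressed E) (hcard : E.card = m)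
    (hm1 : (l - 1).choose 3 ≤ m)
    (hm2 : m ≤ (l - 1).choose 3 + (l - 2).choose 2)
    (hclq : ∃ T ⊆ Finset.Icc 1 l, T.card = l - 1 ∧ hasCliqueOn E 3 T) :
    (link2 E (l - 1) l).card ≤
      (((Finset.Icc 1 (l - 2)).powersetCard 2) \ link E l).card := by
  by_cases hl : 3 ≤ l
  case neg =>
    have hE : E = ∅ := by
      rw [Finset.eq_empty_iff_forall_notMem]
      intro e he
      obtain ⟨hc, hs⟩ := hG e he
      have := Finset.card_le_card hs
      rw [hc, Nat.card_Icc] at this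
      omega
    simp [hE, link2]
  obtain ⟨T, hTsub, hTcard, hTclq⟩ := hclq
  set s := Finset.sort T (·≤·) with hsdef
  have slen : s.length = l - 1 := by rw [hsdef, Finset.length_sort, hTcard]
  have ssort : List.Pairwise (· < ·) s := (Finset.sortedLT_sort T).pairwise
  have smem : ∀ x ∈ s, x ∈ Finset.Icc 1 l := fun x hx => hTsub ((Finset.mem_sort _).1 hx)
  have hget : ∀ k (h : k < s.length), k + 1 ≤ s[k] := by
    intro k
    induction k with
    | zero =>
      intro h
      have h1 := smem s[0] (List.getElem_mem h)
      rw [Finset.mem_Icc] at h1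
      omega
    | succ n ih =>
      intro h
      have h' : n < s.length := by omega
      have h2 := List.pairwise_iff_getElem.mp ssort n (n+1) h' h (by omega)
      have h3 := ih h'
      omega
  have hidx : ∀ x, 1 ≤ x → x ≤ l - 1 → x - 1 < s.length := by
    intro x h1 h2; rw [slen]; omega
  have hvalmem : ∀ x (h : x - 1 < s.length), s.getD (x-1) 0 ∈ T := by
    intro x h
    rw [List.getD_eq_getElem _ _ h]
    exact (Finset.mem_sort _).1 (List.getElem_mem h)
  have hvalge : ∀ x, 1 ≤ x → ∀ (h : x - 1 < s.length), x ≤ s.getD (x-1) 0 := by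
    intro x h1 h
    rw [List.getD_eq_getElem _ _ h]
    have := hget (x-1) h
    omega
  have hvalmono : ∀ x y, 1 ≤ x → x < y → ∀ (hx : x-1 < s.length) (hy : y-1 < s.length),
      s.getD (x-1) 0 < s.getD (y-1) 0 := by
    intro x y h1 hxy hx hy
    rw [List.getD_eq_getElem _ _ hx, List.getD_eq_getElem _ _ hy]
    exact List.pairwise_iff_getElem.mp ssort _ _ hx hy (by omega)
  -- all 3-subsets of [l-1] are edges
  have hcomp : (Finset.Icc 1 (l-1)).powersetCard 3 ⊆ E := by
    intro A hA
    rw [Finset.mem_powersetCard] at hA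
    obtain ⟨hAsub, hAcard⟩ := hA
    have hAlen : (Finset.sort A (·≤·)).length = 3 := by
      rw [Finset.length_sort, hAcard]
    obtain ⟨a, b, c, hval⟩ := List.length_eq_three.mp hAlen
    have hAsort := (Finset.sortedLT_sort A).pairwise
    rw [hval] at hAsort
    simp [List.pairwise_cons] at hAsort
    obtain ⟨⟨hab, hac⟩, hbc⟩ := hAsort
    have hmemA : ∀ x, x ∈ [a,b,c] → 1 ≤ x ∧ x ≤ l - 1 := by
      intro x hx
      have : x ∈ A := by rw [← Finset.mem_sort (·≤·), hval]; exact hx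
      have := hAsub this
      rwa [Finset.mem_Icc] at this
    have ha := hmemA a (by simp)
    have hb := hmemA b (by simp)
    have hc := hmemA c (by simp)
    have hia : a - 1 < s.length := hidx a ha.1 ha.2
    have hib : b - 1 < s.length := hidx b hb.1 hb.2
    have hic : c - 1 < s.length := hidx c hc.1 hc.2
    set a' := s.getD (a-1) 0 with ha'
    set b' := s.getD (b-1) 0 with hb'
    set c' := s.getD (c-1) 0 with hc'
    have hab' : a' < b' := hvalmono a b ha.1 hab hia hib
    have hbc' : b' < c' := hvalmono b c hb.1 hbc hib hic
    have hBsub : ({a', b', c'} : Finset ℕ) ⊆ T := by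
      intro x hx
      simp [Finset.mem_insert] at hx
      rcases hx with rfl | rfl | rfl
      · exact hvalmem a hia
      · exact hvalmem b hib
      · exact hvalmem c hic
    have hBcard : ({a', b', c'} : Finset ℕ).card = 3 :=
      Finset.card_eq_three.mpr ⟨a', b', c', by omega, by omega, by omega, rfl⟩
    have hBE : ({a', b', c'} : Finset ℕ) ∈ E := hTclq _ hBsub hBcard
    apply hlc _ hBE A
    · intro x hx
      have hx2 : x ∈ Finset.sort A (·≤·) := (Finset.mem_sort _).2 hx
      rw [hval] at hx2
      exact (hmemA x hx2).1
    · constructor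
      · rw [hAcard, hBcard]
      · intro k
        rw [hval, sort_triple_aux hab' hbc']
        have h1 : a ≤ a' := hvalge a ha.1 hia
        have h2 : b ≤ b' := hvalge b hb.1 hib
        have h3 : c ≤ c' := hvalge c hc.1 hic
        match k with
        | 0 => simpa using h1
        | 1 => simpa using h2
        | 2 => simpa using h3
        | (n+3) => simp [List.getD]
  -- counting
  have hfilter : (Finset.Icc 1 (l-1)).powersetCard 3 ⊆ E.filter (fun e => l ∉ e) := by
    intro A hA
    rw [Finset.mem_filter]
    refine ⟨hcomp hA, fun hlA => ?_⟩
    rw [Finset.mem_powersetCard] at hA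
    have := hA.1 hlA
    rw [Finset.mem_Icc] at this
    omega
  have hc1 : (l-1).choose 3 ≤ (E.filter (fun e => l ∉ e)).card := by
    have := Finset.card_le_card hfilter
    rw [Finset.card_powersetCard, Nat.card_Icc] at this
    simpa using this
  have hsplit : (E.filter (fun e => l ∈ e)).card + (E.filter (fun e => l ∉ e)).card = m := by
    rw [← hcard]
    exact Finset.card_filter_add_card_filter_not (fun e => l ∈ e)
  have hlinkcard : (link E l).card = (E.filter (fun e => l ∈ e)).card := by
    apply Finset.card_image_of_injOn
    intro e he f hf hef
    rw [Finset.mem_coe, Finset.mem_filter] at he hf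
    have hef' : e.erase l = f.erase l := hef
    rw [← Finset.insert_erase he.2, ← Finset.insert_erase hf.2, hef']
  have hlinkle : (link E l).card ≤ (l-2).choose 2 := by omega
  have hlinkA : ∀ A ∈ link E l, A.card = 2 ∧ A ⊆ Finset.Icc 1 (l-1) := by
    intro A hA
    rw [link, Finset.mem_image] at hA
    obtain ⟨e, he, rfl⟩ := hA
    rw [Finset.mem_filter] at he
    obtain ⟨heE, hle⟩ := he
    obtain ⟨hce, hsub⟩ := hG e heE
    refine ⟨by rw [Finset.card_erase_of_mem hle, hce], fun x hx => ?_⟩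
    rw [Finset.mem_erase] at hx
    have := hsub hx.2
    rw [Finset.mem_Icc] at this ⊢
    have := hx.1
    omega
  set S2 := (link E l).filter (fun A => l-1 ∈ A) with hS2def
  set S1 := (link E l).filter (fun A => l-1 ∉ A) with hS1def
  have hScard : S2.card + S1.card = (link E l).card :=
    Finset.card_filter_add_card_filter_not (fun A => l-1 ∈ A)
  have hnotmem : ∀ B ∈ link2 E (l-1) l, l - 1 ∉ B := by
    intro B hB
    rw [link2, Finset.mem_image] at hB
    obtain ⟨e, he, rfl⟩ := hB
    rw [Finset.erase_right_comm]
    exact Finset.notMem_erase _ _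
  have hinj : (link2 E (l-1) l).card ≤ S2.card := by
    apply Finset.card_le_card_of_injOn (fun B => insert (l-1) B)
    · intro B hB
      have hnB := hnotmem B hB
      rw [link2, Finset.mem_coe, Finset.mem_image] at hB
      obtain ⟨e, he, rfl⟩ := hB
      rw [Finset.mem_filter] at he
      obtain ⟨heE, h1, h2⟩ := he
      rw [hS2def, Finset.mem_coe, Finset.mem_filter]
      constructor
      · rw [link, Finset.mem_image]
        refine ⟨e, Finset.mem_filter.mpr ⟨heE, h2⟩, ?_⟩
        rw [Finset.erase_right_comm]
        beta_reduce
        rw [Finset.insert_erase]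
        rw [Finset.mem_erase]
        exact ⟨by omega, h1⟩
      · exact Finset.mem_insert_self _ _
    · intro B hB B' hB' h
      have hnB := hnotmem B hB
      have hnB' := hnotmem B' hB'
      have h' : insert (l-1) B = insert (l-1) B' := h
      rw [← Finset.erase_insert hnB, ← Finset.erase_insert hnB', h']
  have hS1eq : S1 = ((Finset.Icc 1 (l-2)).powersetCard 2) ∩ link E l := by
    ext A
    rw [hS1def, Finset.mem_filter, Finset.mem_inter, Finset.mem_powersetCard]
    constructor
    · rintro ⟨hA, hnl⟩
      obtain ⟨hc2, hsub⟩ := hlinkA A hA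
      refine ⟨⟨fun x hx => ?_, hc2⟩, hA⟩
      have hm := hsub hx
      rw [Finset.mem_Icc] at hm ⊢
      have hne : x ≠ l - 1 := fun h => hnl (h ▸ hx)
      omega
    · rintro ⟨⟨hsub, _⟩, hA⟩
      refine ⟨hA, fun h => ?_⟩
      have := hsub h
      rw [Finset.mem_Icc] at this
      omega
  have hrhs : (((Finset.Icc 1 (l-2)).powersetCard 2) \ link E l).card + S1.card
      = (l-2).choose 2 := by
    rw [hS1eq]
    rw [Finset.card_sdiff_add_card_inter]
    rw [Finset.card_powersetCard, Nat.card_Icc]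
    simp
  omega
end
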